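/- arXiv:2007.03730 — 4 statements merged into one kernel-verified Lean document; each statement's English description precedes it below -/
import Mathlib

section
/- Let f : ℝ^d → ℝ be measurable and let t ∈ ℝ be such that 0 < P[f(x+G) ≤ t] < 1 for every x ∈ ℝ^d. Then the map x ↦ σ·Φ⁻¹(P[f(x+G) ≤ t]) is 1-Lipschitz with respect to the Euclidean norm, i.e. |σ·Φ⁻¹(P[f(x+G) ≤ t]) − σ·Φ⁻¹(P[f(x′+G) ≤ t])| ≤ ‖x − x′‖₂ for all x, x′ ∈ ℝ^d. -/
open MeasureTheory ProbabilityTheory Real Set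
open scoped ENNReal NNReal

/-- CDF of the standard one-dimensional Gaussian `N(0,1)`. -/
noncomputable def Phi (t : ℝ) : ℝ := ((gaussianReal 0 1) (Set.Iic t)).toReal

/-- Inverse of the standard Gaussian CDF (a genuine inverse on `(0,1)`). -/
noncomputable def PhiInv : ℝ → ℝ := Function.invFun Phi

/-- The Gaussian measure `N(0, σ²I)` on `ℝ^d`, i.e. the `d`-fold product of the
one-dimensional centered Gaussian of variance `σ²`, carried to Euclidean space. -/
noncomputable def gaussPi (d : ℕ) (σ : ℝ) : Measure (EuclideanSpace ℝ (Fin d)) :=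
  Measure.map (MeasurableEquiv.toLp 2 (Fin d → ℝ))
    (Measure.pi fun _ : Fin d => gaussianReal 0 (σ.toNNReal ^ 2))

namespace GaussLip

/-! ### Properties of `Phi` -/

lemma Phi_strictMono : StrictMono Phi := by
  intro u w huw
  have h1 : gaussianReal 0 1 (Iic u) + gaussianReal 0 1 (Ioc u w) = gaussianReal 0 1 (Iic w) := by
    rw [← measure_union (Iic_disjoint_Ioc le_rfl) measurableSet_Ioc, Iic_union_Ioc_eq_Iic huw.le]
  have hpos : 0 < gaussianReal 0 1 (Ioc u w) := by
    rw [gaussianReal_apply 0 one_ne_zero]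
    rw [lintegral_pos_iff_support (measurable_gaussianPDF 0 1)]
    have hsupp : Function.support (gaussianPDF 0 1) = Set.univ := by
      ext y
      simp [Function.mem_support, (gaussianPDF_pos 0 one_ne_zero y).ne']
    rw [hsupp]
    simpa [Real.volume_Ioc] using huw
  have hlt : gaussianReal 0 1 (Iic u) < gaussianReal 0 1 (Iic w) := by
    rw [← h1]
    exact ENNReal.lt_add_right (measure_ne_top _ _) hpos.ne'
  exact ENNReal.toReal_lt_toReal (measure_ne_top _ _) (measure_ne_top _ _) |>.mpr hlt

lemma Phi_sub_le {u w : ℝ} (huw : u ≤ w) : Phi w - Phi u ≤ w - u := by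
  have h1 : gaussianReal 0 1 (Iic u) + gaussianReal 0 1 (Ioc u w) = gaussianReal 0 1 (Iic w) := by
    rw [← measure_union (Iic_disjoint_Ioc le_rfl) measurableSet_Ioc, Iic_union_Ioc_eq_Iic huw]
  have h2 : gaussianReal 0 1 (Ioc u w) ≤ ENNReal.ofReal (w - u) := by
    rw [gaussianReal_apply 0 one_ne_zero]
    calc ∫⁻ x in Ioc u w, gaussianPDF 0 1 x
        ≤ ∫⁻ _ in Ioc u w, (1 : ℝ≥0∞) := by
          refine setLIntegral_mono measurable_const fun x _ => ?_
          rw [gaussianPDF]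
          refine ENNReal.ofReal_le_one.2 ?_
          rw [gaussianPDFReal]
          have h2π : (1:ℝ) ≤ √(2 * π * (1:ℝ≥0)) := by
            rw [show ((1:ℝ≥0):ℝ) = (1:ℝ) by norm_num, mul_one]
            rw [show (1:ℝ) = √1 by simp]
            apply Real.sqrt_le_sqrt
            nlinarith [Real.pi_gt_three]
          have hexp : rexp (-(x - 0) ^ 2 / (2 * (1:ℝ≥0))) ≤ 1 := by
            rw [Real.exp_le_one_iff]
            have : (0:ℝ) ≤ (x - 0)^2 := sq_nonneg _
            have h2 : (0:ℝ) < 2 * ((1:ℝ≥0):ℝ) := by norm_num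
            exact div_nonpos_of_nonpos_of_nonneg (by linarith) h2.le
          calc (√(2 * π * (1:ℝ≥0)))⁻¹ * rexp (-(x - 0) ^ 2 / (2 * (1:ℝ≥0)))
              ≤ 1 * 1 := by
                apply mul_le_mul _ hexp (Real.exp_nonneg _) zero_le_one
                rw [inv_le_one_iff₀]; right; exact h2π
            _ = 1 := by norm_num
      _ = ENNReal.ofReal (w - u) := by
          rw [setLIntegral_const, one_mul, Real.volume_Ioc]
  have h3 : Phi w = Phi u + (gaussianReal 0 1 (Ioc u w)).toReal := by
    rw [Phi, Phi, ← h1, ENNReal.toReal_add (measure_ne_top _ _) (measure_ne_top _ _)]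
  rw [h3]
  have := ENNReal.toReal_le_toReal (measure_ne_top _ _) ENNReal.ofReal_ne_top |>.mpr h2
  rw [ENNReal.toReal_ofReal (by linarith)] at this
  linarith

lemma Phi_continuous : Continuous Phi := by
  have : LipschitzWith 1 Phi := by
    apply LipschitzWith.of_dist_le_mul
    intro u w
    rw [NNReal.coe_one, one_mul, Real.dist_eq, Real.dist_eq]
    rcases le_total u w with h | h
    · rw [abs_of_nonpos (by linarith [(Phi_strictMono.monotone h)]), abs_of_nonpos (by linarith)]
      have := Phi_sub_le h; linarith
    · rw [abs_of_nonneg (by linarith [(Phi_strictMono.monotone h)]), abs_of_nonneg (by linarith)]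
      have := Phi_sub_le h; linarith
  exact this.continuous

lemma Phi_tendsto_one : Filter.Tendsto Phi Filter.atTop (nhds 1) := by
  have h := tendsto_measure_Iic_atTop (gaussianReal 0 1)
  rw [measure_univ] at h
  have := (ENNReal.tendsto_toReal (by norm_num : (1:ℝ≥0∞) ≠ ⊤)).comp h
  exact this

lemma gaussianReal_singleton (a : ℝ) : gaussianReal 0 1 {a} = 0 :=
  gaussianReal_absolutelyContinuous 0 one_ne_zero (by simp)

lemma Phi_neg (a : ℝ) : Phi (-a) = 1 - Phi a := by
  have hmap := gaussianReal_map_const_mul (μ := 0) (v := 1) (-1 : ℝ)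
  have hv : (NNReal.mk ((-1:ℝ)^2) (sq_nonneg _)) * 1 = 1 := by
    ext; norm_num
  rw [hv, mul_zero] at hmap
  have h1 : gaussianReal 0 1 (Iic (-a)) = gaussianReal 0 1 (Ici a) := by
    conv_lhs => rw [← hmap]
    rw [Measure.map_apply (f := fun x : ℝ => -1 * x) (by fun_prop) measurableSet_Iic]
    congr 1
    ext y
    simp only [mem_preimage, mem_Iic, mem_Ici]
    constructor <;> intro hy <;> linarith
  have h2 : gaussianReal 0 1 (Ici a) = gaussianReal 0 1 (Ioi a) :=
    (measure_congr (Ioi_ae_eq_Ici' (gaussianReal_singleton a))).symm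
  have h3 : gaussianReal 0 1 (Ioi a) = 1 - gaussianReal 0 1 (Iic a) := by
    rw [← Set.compl_Iic, prob_compl_eq_one_sub measurableSet_Iic]
  rw [Phi, h1, h2, h3, ENNReal.toReal_sub_of_le prob_le_one (by norm_num), ENNReal.toReal_one, Phi]

lemma Phi_surj {p : ℝ} (h0 : 0 < p) (h1 : p < 1) : ∃ a, Phi a = p := by
  obtain ⟨b, hb⟩ := (Phi_tendsto_one.eventually (eventually_gt_nhds h1)).exists
  obtain ⟨y, hy⟩ := (Phi_tendsto_one.eventually (eventually_gt_nhds (by linarith : 1 - p < 1))).exists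
  have ha : Phi (-y) < p := by rw [Phi_neg]; linarith
  have hab : -y ≤ b := by
    by_contra hc
    push_neg at hc
    exact absurd (Phi_strictMono hc) (by linarith)
  obtain ⟨c, _, hc⟩ := intermediate_value_Icc hab Phi_continuous.continuousOn
    (mem_Icc.2 ⟨ha.le, hb.le⟩)
  exact ⟨c, hc⟩

lemma Phi_PhiInv {p : ℝ} (h0 : 0 < p) (h1 : p < 1) : Phi (PhiInv p) = p :=
  Function.invFun_eq (Phi_surj h0 h1)

lemma PhiInv_Phi (y : ℝ) : PhiInv (Phi y) = y :=
  Function.leftInverse_invFun Phi_strictMono.injective y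

/-! ### Gaussian convolution -/

lemma pdf_conv {a b : ℝ≥0} (ha : a ≠ 0) (hb : b ≠ 0) (z x : ℝ) :
    gaussianPDFReal 0 a x * gaussianPDFReal 0 b (z - x) =
      gaussianPDFReal 0 (a + b) z * gaussianPDFReal ((a : ℝ) * z / ((a : ℝ) + b))
        (a * b / (a + b)) x := by
  have hA : (0:ℝ) < a := lt_of_le_of_ne (a.coe_nonneg) (by exact_mod_cast ha.symm)
  have hB : (0:ℝ) < b := lt_of_le_of_ne (b.coe_nonneg) (by exact_mod_cast hb.symm)
  have hAB : (0:ℝ) < (a:ℝ) + b := by linarith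
  have hcoe1 : ((a + b : ℝ≥0) : ℝ) = (a:ℝ) + b := by push_cast; ring
  have hcoe2 : ((a * b / (a + b) : ℝ≥0) : ℝ) = (a:ℝ) * b / ((a:ℝ) + b) := by push_cast; ring
  simp only [gaussianPDFReal, hcoe1, hcoe2]
  rw [mul_mul_mul_comm, ← Real.exp_add, mul_mul_mul_comm, ← Real.exp_add, ← mul_inv, ← mul_inv,
    ← Real.sqrt_mul (by positivity), ← Real.sqrt_mul (by positivity)]
  congr 2
  · field_simp
  · field_simp
    ring

lemma integral_pdf_conv {a b : ℝ≥0} (ha : a ≠ 0) (hb : b ≠ 0) (z : ℝ) :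
    ∫ x, gaussianPDFReal 0 a x * gaussianPDFReal 0 b (z - x) = gaussianPDFReal 0 (a + b) z := by
  simp_rw [pdf_conv ha hb z]
  rw [integral_const_mul, integral_gaussianPDFReal_eq_one _
    (by simp [ha, hb, div_eq_zero_iff] : a * b / (a + b) ≠ 0), mul_one]

lemma gauss_conv (a b : ℝ≥0) :
    ((gaussianReal 0 a).prod (gaussianReal 0 b)).map (fun p : ℝ × ℝ => p.1 + p.2) =
      gaussianReal 0 (a + b) := by
  by_cases ha : a = 0
  · subst ha
    rw [gaussianReal_zero_var, Measure.dirac_prod, Measure.map_map (by fun_prop) (by fun_prop)]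
    have : ((fun p : ℝ × ℝ => p.1 + p.2) ∘ Prod.mk (0:ℝ)) = id := by funext x; simp
    rw [this, Measure.map_id, zero_add]
  by_cases hb : b = 0
  · subst hb
    rw [gaussianReal_zero_var, Measure.prod_dirac, Measure.map_map (by fun_prop) (by fun_prop)]
    have : ((fun p : ℝ × ℝ => p.1 + p.2) ∘ fun x : ℝ => (x, (0:ℝ))) = id := by funext x; simp
    rw [this, Measure.map_id, add_zero]
  have hab : a + b ≠ 0 := by simp [ha, hb]
  ext S hS
  rw [Measure.map_apply (by fun_prop) hS, Measure.prod_apply (hS.preimage (by fun_prop))]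
  have step1 : ∀ x : ℝ, gaussianReal 0 b (Prod.mk x ⁻¹' ((fun p : ℝ × ℝ => p.1 + p.2) ⁻¹' S)) =
      ∫⁻ z in S, ENNReal.ofReal (gaussianPDFReal 0 b (z - x)) ∂volume := by
    intro x
    have hpre : (Prod.mk x ⁻¹' ((fun p : ℝ × ℝ => p.1 + p.2) ⁻¹' S)) = (x + ·) ⁻¹' S := rfl
    rw [hpre, ← Measure.map_apply (by fun_prop) hS, gaussianReal_map_const_add, zero_add,
      gaussianReal_apply _ hb]
    congr 1 with z
    rw [gaussianPDF, show gaussianPDFReal x b z = gaussianPDFReal 0 b (z - x) by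
      rw [gaussianPDFReal_sub, zero_add]]
  simp_rw [step1]
  have hmeasb : Measurable fun p : ℝ × ℝ => ENNReal.ofReal (gaussianPDFReal 0 b (p.2 - p.1)) :=
    ENNReal.measurable_ofReal.comp
      ((measurable_gaussianPDFReal 0 b).comp (measurable_snd.sub measurable_fst))
  have hF : Measurable fun x => ∫⁻ z in S, ENNReal.ofReal (gaussianPDFReal 0 b (z - x)) ∂volume :=
    Measurable.lintegral_prod_right' (f := fun p : ℝ × ℝ =>
      ENNReal.ofReal (gaussianPDFReal 0 b (p.2 - p.1))) hmeasb
  have hmeasfull : Measurable (Function.uncurry fun x z =>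
      gaussianPDF 0 a x * ENNReal.ofReal (gaussianPDFReal 0 b (z - x))) :=
    ((measurable_gaussianPDF 0 a).comp measurable_fst).mul hmeasb
  have inner_eq : ∀ z : ℝ,
      ∫⁻ x, gaussianPDF 0 a x * ENNReal.ofReal (gaussianPDFReal 0 b (z - x)) ∂volume =
        gaussianPDF 0 (a + b) z := by
    intro z
    have h1 : ∀ x : ℝ, gaussianPDF 0 a x * ENNReal.ofReal (gaussianPDFReal 0 b (z - x)) =
        ENNReal.ofReal (gaussianPDFReal 0 a x * gaussianPDFReal 0 b (z - x)) := fun x =>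
      (ENNReal.ofReal_mul (gaussianPDFReal_nonneg 0 a x)).symm
    simp_rw [h1]
    have hint : Integrable fun x => gaussianPDFReal 0 a x * gaussianPDFReal 0 b (z - x) := by
      simp_rw [pdf_conv ha hb z]
      exact (integrable_gaussianPDFReal _ _).const_mul _
    rw [← ofReal_integral_eq_lintegral_ofReal hint (ae_of_all _ fun x =>
      mul_nonneg (gaussianPDFReal_nonneg 0 a x) (gaussianPDFReal_nonneg 0 b (z - x))),
      integral_pdf_conv ha hb]
    rfl
  calc ∫⁻ x, (∫⁻ z in S, ENNReal.ofReal (gaussianPDFReal 0 b (z - x)) ∂volume)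
        ∂gaussianReal 0 a
      = ∫⁻ x, gaussianPDF 0 a x *
          (∫⁻ z in S, ENNReal.ofReal (gaussianPDFReal 0 b (z - x)) ∂volume) ∂volume := by
        rw [gaussianReal_of_var_ne_zero _ ha,
          lintegral_withDensity_eq_lintegral_mul volume (measurable_gaussianPDF 0 a) hF]
        simp only [Pi.mul_apply]
    _ = ∫⁻ x, ∫⁻ z in S, gaussianPDF 0 a x *
          ENNReal.ofReal (gaussianPDFReal 0 b (z - x)) ∂volume ∂volume := by
        congr 1 with x
        exact (lintegral_const_mul (gaussianPDF 0 a x)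
          (f := fun z => ENNReal.ofReal (gaussianPDFReal 0 b (z - x)))
          (ENNReal.measurable_ofReal.comp
          ((measurable_gaussianPDFReal 0 b).comp (measurable_id.sub measurable_const)))).symm
    _ = ∫⁻ z in S, ∫⁻ x, gaussianPDF 0 a x *
          ENNReal.ofReal (gaussianPDFReal 0 b (z - x)) ∂volume ∂volume :=
        lintegral_lintegral_swap hmeasfull.aemeasurable
    _ = ∫⁻ z in S, gaussianPDF 0 (a + b) z ∂volume := by
        exact lintegral_congr fun z => inner_eq z
    _ = gaussianReal 0 (a + b) S := (gaussianReal_apply _ hab S).symm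

/-! ### Product structure lemmas -/

lemma lintegral_pi_prod : ∀ {n : ℕ} (μ : Fin n → Measure ℝ), (∀ i, IsProbabilityMeasure (μ i)) →
    ∀ (f : Fin n → ℝ → ℝ≥0∞), (∀ i, Measurable (f i)) →
    ∫⁻ v, ∏ i, f i (v i) ∂Measure.pi μ = ∏ i, ∫⁻ x, f i x ∂μ i := by
  intro n
  induction n with
  | zero =>
    intro μ hμ f _
    haveI : ∀ i, SigmaFinite (μ i) := fun i => by haveI := hμ i; infer_instance
    rw [Measure.pi_of_empty]
    simp
  | succ n ih =>
    intro μ hμ f hf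
    haveI : ∀ i, SigmaFinite (μ i) := fun i => by haveI := hμ i; infer_instance
    have hmp := measurePreserving_piFinSuccAbove μ 0
    set e := MeasurableEquiv.piFinSuccAbove (fun _ : Fin (n+1) => ℝ) 0 with he
    have key : ∀ v : Fin (n+1) → ℝ,
        ∏ i, f i (v i) = f 0 (e v).1 * ∏ i : Fin n, f i.succ ((e v).2 i) := by
      intro v
      rw [Fin.prod_univ_succ]
      congr 1
    calc ∫⁻ v, ∏ i, f i (v i) ∂Measure.pi μ
        = ∫⁻ v, f 0 (e v).1 * ∏ i : Fin n, f i.succ ((e v).2 i) ∂Measure.pi μ := by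
          exact lintegral_congr key
      _ = ∫⁻ p : ℝ × (Fin n → ℝ), f 0 p.1 * ∏ i : Fin n, f i.succ (p.2 i)
            ∂((μ 0).prod (Measure.pi fun j : Fin n => μ (Fin.succAbove 0 j))) := by
          exact hmp.lintegral_comp ((hf 0).comp measurable_fst |>.mul
            (Finset.measurable_prod _ fun (i : Fin n) _ =>
              (hf i.succ).comp ((measurable_pi_apply i).comp measurable_snd)))
      _ = (∫⁻ x, f 0 x ∂μ 0) * ∫⁻ w, ∏ i : Fin n, f i.succ (w i)
            ∂(Measure.pi fun j : Fin n => μ (Fin.succAbove 0 j)) :=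
          lintegral_prod_mul (hf 0).aemeasurable
            (Finset.measurable_prod Finset.univ fun (i : Fin n) _ =>
              (hf i.succ).comp (measurable_pi_apply i)).aemeasurable
      _ = (∫⁻ x, f 0 x ∂μ 0) * ∏ i : Fin n, ∫⁻ x, f i.succ x ∂μ i.succ := by
          congr 1
          have : (fun j : Fin n => μ (Fin.succAbove 0 j)) = fun j : Fin n => μ j.succ := by
            funext j; rw [Fin.succAbove_zero]
          rw [this]
          exact ih (fun j => μ j.succ) (fun j => hμ j.succ) (fun j => f j.succ)
            (fun j => hf j.succ)
      _ = ∏ i, ∫⁻ x, f i x ∂μ i := by rw [Fin.prod_univ_succ]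

lemma map_dot {n : ℕ} (s : ℝ≥0) (h : Fin n → ℝ) :
    (Measure.pi fun _ : Fin n => gaussianReal 0 s).map (fun v => ∑ i, h i * v i) =
      gaussianReal 0 ((∑ i, h i ^ 2).toNNReal * s) := by
  induction n with
  | zero =>
    have h0 : (fun v : Fin 0 → ℝ => ∑ i, h i * v i) = fun _ => (0:ℝ) := by
      funext v; simp
    rw [h0, Measure.map_const, measure_univ, one_smul]
    have : ((∑ i : Fin 0, h i ^ 2).toNNReal * s) = 0 := by simp
    rw [this, gaussianReal_zero_var]
  | succ n ih =>
    have hmp := measurePreserving_piFinSuccAbove (fun _ : Fin (n+1) => gaussianReal 0 s) 0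
    set e := MeasurableEquiv.piFinSuccAbove (fun _ : Fin (n+1) => ℝ) 0 with he
    have hcomp : (fun v : Fin (n+1) → ℝ => ∑ i, h i * v i) =
        (fun p : ℝ × (Fin n → ℝ) => h 0 * p.1 + ∑ i : Fin n, h i.succ * p.2 i) ∘ e := by
      funext v
      show ∑ i, h i * v i = h 0 * (e v).1 + ∑ i : Fin n, h i.succ * (e v).2 i
      rw [Fin.sum_univ_succ]
      congr 1
    have hG : Measurable (fun p : ℝ × (Fin n → ℝ) =>
        h 0 * p.1 + ∑ i : Fin n, h i.succ * p.2 i) := by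
      apply Measurable.add
      · exact measurable_fst.const_mul _
      · exact Finset.measurable_sum _ fun i _ =>
          ((measurable_pi_apply i).comp measurable_snd).const_mul _
    rw [hcomp, ← Measure.map_map hG e.measurable, hmp.map_eq]
    have hsplit : (fun p : ℝ × (Fin n → ℝ) => h 0 * p.1 + ∑ i : Fin n, h i.succ * p.2 i) =
        (fun q : ℝ × ℝ => q.1 + q.2) ∘
          (Prod.map (fun x : ℝ => h 0 * x) (fun w : Fin n → ℝ => ∑ i : Fin n, h i.succ * w i)) := by
      funext p; rfl
    have hg : Measurable (fun w : Fin n → ℝ => ∑ i : Fin n, h i.succ * w i) :=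
      Finset.measurable_sum Finset.univ fun (i : Fin n) _ =>
        (measurable_pi_apply i).const_mul _
    have hf0 : Measurable (fun x : ℝ => h 0 * x) := measurable_id.const_mul _
    have hmaps := Measure.map_prod_map (f := fun x : ℝ => h 0 * x)
      (g := fun w : Fin n → ℝ => ∑ i : Fin n, h i.succ * w i)
      (gaussianReal 0 s) (Measure.pi fun _ : Fin n => gaussianReal 0 s) hf0 hg
    rw [hsplit, ← Measure.map_map (f := Prod.map (fun x : ℝ => h 0 * x)
        (fun w : Fin n → ℝ => ∑ i : Fin n, h i.succ * w i))
        (g := fun q : ℝ × ℝ => q.1 + q.2) (by fun_prop) (hf0.prodMap hg), ← hmaps]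
    have h1 : (gaussianReal 0 s).map (fun x => h 0 * x) =
        gaussianReal 0 (NNReal.mk ((h 0)^2) (sq_nonneg _) * s) := by
      have := gaussianReal_map_const_mul (μ := 0) (v := s) (h 0)
      rw [mul_zero] at this
      exact this
    have h2 := ih (fun i => h i.succ)
    rw [h1, h2, gauss_conv]
    congr 1
    have hnn1 : ((∑ i : Fin n, h i.succ ^ 2).toNNReal : ℝ) = ∑ i : Fin n, h i.succ ^ 2 :=
      Real.coe_toNNReal _ (Finset.sum_nonneg fun i _ => sq_nonneg _)
    have hnn2 : ((∑ i : Fin (n+1), h i ^ 2).toNNReal : ℝ) = ∑ i : Fin (n+1), h i ^ 2 :=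
      Real.coe_toNNReal _ (Finset.sum_nonneg fun i _ => sq_nonneg _)
    refine NNReal.coe_injective ?_
    rw [NNReal.coe_add, NNReal.coe_mul, NNReal.coe_mul, NNReal.coe_mul, hnn1, hnn2,
      NNReal.coe_mk, Fin.sum_univ_succ]
    ring

/-! ### Tilting -/

lemma withDensity_tilt (v : ℝ≥0) (hv : v ≠ 0) (m : ℝ) :
    (gaussianReal 0 v).withDensity
        (fun y => ENNReal.ofReal (rexp ((2 * m * y - m ^ 2) / (2 * (v : ℝ))))) =
      gaussianReal m v := by
  have hvpos : (0:ℝ) < v := lt_of_le_of_ne v.coe_nonneg (by exact_mod_cast hv.symm)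
  rw [gaussianReal_of_var_ne_zero 0 hv, gaussianReal_of_var_ne_zero m hv,
    ← withDensity_mul (f := gaussianPDF 0 v)
      (g := fun y => ENNReal.ofReal (rexp ((2 * m * y - m ^ 2) / (2 * (v:ℝ)))))
      volume (measurable_gaussianPDF 0 v) (by fun_prop)]
  congr 1
  funext y
  show gaussianPDF 0 v y * ENNReal.ofReal (rexp ((2 * m * y - m ^ 2) / (2 * (v:ℝ)))) =
    gaussianPDF m v y
  rw [gaussianPDF, gaussianPDF, ← ENNReal.ofReal_mul (gaussianPDFReal_nonneg 0 v y)]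
  congr 1
  rw [gaussianPDFReal, gaussianPDFReal, mul_assoc, ← Real.exp_add]
  congr 1
  field_simp
  ring

/-! ### Shift of the product Gaussian -/

lemma pi_shift {n : ℕ} (s : ℝ≥0) (hs : s ≠ 0) (h : Fin n → ℝ) :
    (Measure.pi fun _ : Fin n => gaussianReal 0 s).map (· + h) =
      (Measure.pi fun _ : Fin n => gaussianReal 0 s).withDensity
        (fun v => ∏ i, ENNReal.ofReal (rexp ((2 * h i * v i - h i ^ 2) / (2 * (s:ℝ))))) := by
  have hadd : Measurable (fun v : Fin n → ℝ => v + h) :=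
    measurable_pi_iff.2 fun i => by fun_prop
  have step1 : (Measure.pi fun _ : Fin n => gaussianReal 0 s).map (· + h) =
      Measure.pi (fun i : Fin n => gaussianReal (h i) s) := by
    refine (Measure.pi_eq fun S hS => ?_).symm
    rw [Measure.map_apply hadd (MeasurableSet.univ_pi hS)]
    have hpre : (· + h) ⁻¹' (Set.pi univ S) = Set.pi univ (fun i => (· + h i) ⁻¹' (S i)) := by
      ext v
      simp only [Set.mem_preimage, Set.mem_univ_pi]
      rfl
    rw [hpre, Measure.pi_pi]
    refine Finset.prod_congr rfl fun i _ => ?_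
    have hmc := gaussianReal_map_add_const (μ := 0) (v := s) (h i)
    rw [zero_add] at hmc
    rw [← hmc, Measure.map_apply (f := fun x : ℝ => x + h i) (by fun_prop) (hS i)]
  have step2 : Measure.pi (fun i : Fin n => gaussianReal (h i) s) =
      (Measure.pi fun _ : Fin n => gaussianReal 0 s).withDensity
        (fun v => ∏ i, ENNReal.ofReal (rexp ((2 * h i * v i - h i ^ 2) / (2 * (s:ℝ))))) := by
    refine Measure.pi_eq fun S hS => ?_
    rw [withDensity_apply _ (MeasurableSet.univ_pi hS),
      ← lintegral_indicator (MeasurableSet.univ_pi hS)]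
    have hind : ∀ v : Fin n → ℝ, (Set.pi univ S).indicator
        (fun v => ∏ i, ENNReal.ofReal (rexp ((2 * h i * v i - h i ^ 2) / (2 * (s:ℝ))))) v =
        ∏ i, (S i).indicator
          (fun y => ENNReal.ofReal (rexp ((2 * h i * y - h i ^ 2) / (2 * (s:ℝ))))) (v i) := by
      intro v
      by_cases hv : v ∈ Set.pi univ S
      · rw [Set.indicator_of_mem hv]
        exact Finset.prod_congr rfl fun i _ =>
          (Set.indicator_of_mem (hv i (Set.mem_univ i))
            (fun y => ENNReal.ofReal (rexp ((2 * h i * y - h i ^ 2) / (2 * (s:ℝ)))))).symm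
      · rw [Set.indicator_of_notMem hv]
        symm
        rw [Set.mem_univ_pi] at hv
        push_neg at hv
        obtain ⟨i, hi⟩ := hv
        exact Finset.prod_eq_zero (Finset.mem_univ i) (Set.indicator_of_notMem hi _)
    rw [lintegral_congr hind,
      lintegral_pi_prod (fun _ => gaussianReal 0 s) (fun _ => inferInstance)
        (fun i => (S i).indicator
          (fun y => ENNReal.ofReal (rexp ((2 * h i * y - h i ^ 2) / (2 * (s:ℝ))))))
        (fun i => Measurable.indicator (by fun_prop) (hS i))]
    refine Finset.prod_congr rfl fun i _ => ?_
    rw [lintegral_indicator (hS i), ← withDensity_apply _ (hS i), withDensity_tilt s hs (h i)]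
  rw [step1, step2]

/-! ### A Neyman–Pearson style comparison -/

lemma np_lemma {α : Type*} [MeasurableSpace α] (μ : Measure α) [IsProbabilityMeasure μ]
    {X : α → ℝ} (hX : Measurable X) {G : ℝ → ℝ≥0∞} (hG : Monotone G) (hGm : Measurable G)
    {A : Set α} (hA : MeasurableSet A) {c : ℝ}
    (hAB : μ A = μ (X ⁻¹' Iic c)) :
    ∫⁻ v in X ⁻¹' Iic c, G (X v) ∂μ ≤ ∫⁻ v in A, G (X v) ∂μ := by
  set B := X ⁻¹' Iic c with hBdef
  have hB : MeasurableSet B := hX measurableSet_Iic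
  have hsplitA : ∫⁻ v in A, G (X v) ∂μ =
      ∫⁻ v in A ∩ B, G (X v) ∂μ + ∫⁻ v in A \ B, G (X v) ∂μ := by
    rw [← lintegral_union (hA.diff hB) (disjoint_sdiff_self_right.mono_left inter_subset_right),
      Set.inter_union_diff]
  have hsplitB : ∫⁻ v in B, G (X v) ∂μ =
      ∫⁻ v in A ∩ B, G (X v) ∂μ + ∫⁻ v in B \ A, G (X v) ∂μ := by
    rw [← lintegral_union (hB.diff hA) (disjoint_sdiff_self_right.mono_left inter_subset_left),
      Set.inter_comm, Set.inter_union_diff]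
  rw [hsplitA, hsplitB]
  refine add_le_add le_rfl ?_
  have hmeq : μ (B \ A) = μ (A \ B) := by
    have e1 : μ (A ∩ B) + μ (A \ B) = μ A := measure_inter_add_diff A hB
    have e2 : μ (A ∩ B) + μ (B \ A) = μ B := by
      rw [Set.inter_comm]; exact measure_inter_add_diff B hA
    rw [hAB] at e1
    rw [← e2] at e1
    exact (ENNReal.add_right_inj (measure_ne_top μ _)).1 e1.symm
  calc ∫⁻ v in B \ A, G (X v) ∂μ
      ≤ ∫⁻ _ in B \ A, G c ∂μ := by
        refine setLIntegral_mono measurable_const fun v hv => ?_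
        exact hG hv.1
    _ = G c * μ (B \ A) := by rw [setLIntegral_const]
    _ = G c * μ (A \ B) := by rw [hmeq]
    _ = ∫⁻ _ in A \ B, G c ∂μ := by rw [setLIntegral_const]
    _ ≤ ∫⁻ v in A \ B, G (X v) ∂μ := by
        refine setLIntegral_mono (hGm.comp hX) fun v hv => ?_
        exact hG (le_of_not_ge fun hle => hv.2 hle)

/-! ### Gaussian of a half line -/

lemma gauss_Iic (V : ℝ≥0) (hV : V ≠ 0) (u : ℝ) :
    ((gaussianReal 0 V) (Iic u)).toReal = Phi (u / Real.sqrt V) := by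
  have hVpos : (0:ℝ) < V := lt_of_le_of_ne V.coe_nonneg (by exact_mod_cast hV.symm)
  have hτ : 0 < Real.sqrt V := Real.sqrt_pos.2 hVpos
  have hmap := gaussianReal_map_const_mul (μ := 0) (v := 1) (Real.sqrt V)
  rw [mul_zero] at hmap
  have hvar : (NNReal.mk ((Real.sqrt V)^2) (sq_nonneg _)) * 1 = V := by
    ext
    simp [Real.sq_sqrt hVpos.le]
  rw [hvar] at hmap
  rw [← hmap, Measure.map_apply (f := fun x : ℝ => Real.sqrt V * x) (by fun_prop) measurableSet_Iic]
  have hpre : (fun x : ℝ => Real.sqrt V * x) ⁻¹' (Iic u) = Iic (u / Real.sqrt V) := by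
    ext y
    simp only [Set.mem_preimage, Set.mem_Iic]
    rw [← le_div_iff₀' hτ]
  rw [hpre]
  rfl

/-! ### Core shift inequality in the product space -/

set_option maxHeartbeats 1000000 in
lemma core {n : ℕ} {σ : ℝ} (hσ : 0 < σ) {A : Set (Fin n → ℝ)} (hA : MeasurableSet A)
    (h : Fin n → ℝ)
    (hp0 : 0 < ((Measure.pi fun _ : Fin n => gaussianReal 0 (σ.toNNReal ^ 2)) A).toReal)
    (hp1 : ((Measure.pi fun _ : Fin n => gaussianReal 0 (σ.toNNReal ^ 2)) A).toReal < 1) :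
    Phi (PhiInv (((Measure.pi fun _ : Fin n => gaussianReal 0 (σ.toNNReal ^ 2)) A).toReal)
        - Real.sqrt (∑ i, h i ^ 2) / σ) ≤
      ((Measure.pi fun _ : Fin n => gaussianReal 0 (σ.toNNReal ^ 2)) ((· + h) ⁻¹' A)).toReal := by
  set s : ℝ≥0 := σ.toNNReal ^ 2 with hsdef
  have hs : s ≠ 0 := pow_ne_zero _ (by simp [Real.toNNReal_eq_zero, not_le, hσ])
  have hscoe : (s:ℝ) = σ ^ 2 := by
    rw [hsdef, NNReal.coe_pow, Real.coe_toNNReal _ hσ.le]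
  set μ := Measure.pi fun _ : Fin n => gaussianReal 0 s with hμdef
  set p := (μ A).toReal with hpdef
  set H := ∑ i, h i ^ 2 with hHdef
  have hHnn : 0 ≤ H := Finset.sum_nonneg fun i _ => sq_nonneg _
  by_cases hH0 : H = 0
  · have hzero : h = 0 := by
      funext i
      have := (Finset.sum_eq_zero_iff_of_nonneg fun i _ => sq_nonneg (h i)).1 hH0 i
        (Finset.mem_univ i)
      exact pow_eq_zero_iff two_ne_zero |>.1 this
    have hid : (· + h) ⁻¹' A = A := by
      rw [hzero]
      ext v
      simp
    rw [hid, hH0, Real.sqrt_zero, zero_div, sub_zero, Phi_PhiInv hp0 hp1]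
  · have hHpos : 0 < H := lt_of_le_of_ne hHnn (Ne.symm hH0)
    set V : ℝ≥0 := H.toNNReal * s with hVdef
    have hVne : V ≠ 0 := mul_ne_zero (by simp [Real.toNNReal_eq_zero, not_le, hHpos]) hs
    have hVcoe : (V:ℝ) = H * σ ^ 2 := by
      rw [hVdef, NNReal.coe_mul, Real.coe_toNNReal _ hHnn, hscoe]
    set τ := Real.sqrt (V:ℝ) with hτdef
    have hτpos : 0 < τ := Real.sqrt_pos.2 (by rw [hVcoe]; positivity)
    set c := τ * PhiInv p with hcdef
    set X := fun v : Fin n → ℝ => ∑ i, h i * v i with hXdef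
    have hXm : Measurable X :=
      Finset.measurable_sum _ fun i _ => (measurable_pi_apply i).const_mul _
    have hlaw : μ.map X = gaussianReal 0 V := by
      have := map_dot s h
      rw [← hHdef] at this
      exact this
    have hμB : μ A = μ (X ⁻¹' Iic c) := by
      rw [← Measure.map_apply hXm measurableSet_Iic, hlaw]
      refine ((ENNReal.toReal_eq_toReal_iff' (measure_ne_top _ _) (measure_ne_top _ _)).1 ?_)
      rw [gauss_Iic V hVne, hcdef, ← hτdef, mul_div_cancel_left₀ _ hτpos.ne',
        Phi_PhiInv hp0 hp1]
    set G := fun y : ℝ => ENNReal.ofReal (rexp ((2 * y - H) / (2 * (s:ℝ)))) with hGdef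
    have h2s : (0:ℝ) < 2 * (s:ℝ) := by rw [hscoe]; positivity
    have hGm : Measurable G := by
      rw [hGdef]; fun_prop
    have hGmono : Monotone G := by
      intro y z hyz
      apply ENNReal.ofReal_le_ofReal
      apply Real.exp_le_exp.2
      gcongr
      all_goals linarith
    have hadd : Measurable (fun v : Fin n → ℝ => v + h) :=
      measurable_pi_iff.2 fun i => by fun_prop
    have hshift : μ ((· + h) ⁻¹' A) = ∫⁻ v in A, G (X v) ∂μ := by
      rw [← Measure.map_apply hadd hA, pi_shift s hs h, withDensity_apply _ hA]
      refine setLIntegral_congr_fun hA (fun v _ => ?_)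
      rw [← ENNReal.ofReal_prod_of_nonneg fun i _ => Real.exp_nonneg _, ← Real.exp_sum]
      congr 2
      rw [← Finset.sum_div]
      congr 1
      rw [Finset.sum_sub_distrib]
      congr 1
      rw [hXdef, Finset.mul_sum]
      exact Finset.sum_congr rfl fun i _ => by ring
    have hmain : ∫⁻ v in X ⁻¹' Iic c, G (X v) ∂μ ≤ ∫⁻ v in A, G (X v) ∂μ :=
      np_lemma (X := X) (G := G) (A := A) (c := c) μ hXm hGmono hGm hA hμB
    have hBval : (∫⁻ v in X ⁻¹' Iic c, G (X v) ∂μ) = gaussianReal 0 V (Iic (c - H)) := by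
      rw [← setLIntegral_map measurableSet_Iic hGm hXm, hlaw]
      have harg : ∀ y : ℝ, (2 * y - H) / (2 * (s:ℝ)) = (2 * H * y - H ^ 2) / (2 * (V:ℝ)) := by
        intro y
        rw [hVcoe, hscoe, div_eq_div_iff (by positivity)
          (ne_of_gt (mul_pos two_pos (mul_pos hHpos (pow_pos hσ 2))))]
        ring
      have hGrw : ∀ y : ℝ, G y = ENNReal.ofReal (rexp ((2 * H * y - H ^ 2) / (2 * (V:ℝ)))) :=
        fun y => by rw [hGdef]; simp only; rw [harg y]
      rw [setLIntegral_congr_fun measurableSet_Iic (fun y _ => hGrw y),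
        ← withDensity_apply _ measurableSet_Iic, withDensity_tilt V hVne H]
      have hmc := gaussianReal_map_add_const (μ := 0) (v := V) H
      rw [zero_add] at hmc
      rw [← hmc, Measure.map_apply (f := fun y : ℝ => y + H) (by fun_prop) measurableSet_Iic]
      congr 1
      ext y
      simp only [Set.mem_preimage, Set.mem_Iic]
      constructor <;> intro hy <;> linarith
    have hfin : (∫⁻ v in A, G (X v) ∂μ) ≠ ⊤ := by
      rw [← hshift]
      exact measure_ne_top _ _
    have hτeq : τ = Real.sqrt H * σ := by
      rw [hτdef, hVcoe, Real.sqrt_mul hHnn, Real.sqrt_sq hσ.le]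
    calc Phi (PhiInv p - Real.sqrt H / σ)
        = (gaussianReal 0 V (Iic (c - H))).toReal := by
          rw [gauss_Iic V hVne, ← hτdef]
          congr 1
          rw [hcdef]
          have h1 : (τ * PhiInv p - H) / τ = PhiInv p - H / τ := by
            field_simp
          have h2 : H / τ = Real.sqrt H / σ := by
            rw [hτeq, div_eq_div_iff
              (ne_of_gt (mul_pos (Real.sqrt_pos.2 hHpos) hσ)) hσ.ne']
            linear_combination (-σ) * (Real.sq_sqrt hHnn)
          rw [h1, h2]
      _ = (∫⁻ v in X ⁻¹' Iic c, G (X v) ∂μ).toReal := by rw [hBval]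
      _ ≤ (∫⁻ v in A, G (X v) ∂μ).toReal := ENNReal.toReal_mono hfin hmain
      _ = (μ ((· + h) ⁻¹' A)).toReal := by rw [hshift]

end GaussLip

open GaussLip

set_option maxHeartbeats 1000000

/-- For measurable `f : ℝ^d → ℝ` and `t ∈ ℝ` with
`0 < P[f(x+G) ≤ t] < 1` for every `x`, the map `x ↦ σ·Φ⁻¹(P[f(x+G) ≤ t])`
is 1-Lipschitz with respect to the Euclidean norm. -/
theorem indicator_smoothing_lipschitz (d : ℕ) (hd : 1 ≤ d) (σ : ℝ) (hσ : 0 < σ)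
    (f : EuclideanSpace ℝ (Fin d) → ℝ) (hf : Measurable f) (t : ℝ)
    (hprob : ∀ x : EuclideanSpace ℝ (Fin d),
      0 < ((gaussPi d σ) {v | f (x + v) ≤ t}).toReal ∧
        ((gaussPi d σ) {v | f (x + v) ≤ t}).toReal < 1) :
    ∀ x x' : EuclideanSpace ℝ (Fin d),
      |σ * PhiInv (((gaussPi d σ) {v | f (x + v) ≤ t}).toReal) -
        σ * PhiInv (((gaussPi d σ) {v | f (x' + v) ≤ t}).toReal)| ≤ ‖x - x'‖ := by
  have key : ∀ x x' : EuclideanSpace ℝ (Fin d),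
      σ * PhiInv (((gaussPi d σ) {v | f (x + v) ≤ t}).toReal) -
        σ * PhiInv (((gaussPi d σ) {v | f (x' + v) ≤ t}).toReal) ≤ ‖x - x'‖ := by
    intro x x'
    set e := (MeasurableEquiv.toLp 2 (Fin d → ℝ)).symm with hedef
    have hmeasset : ∀ y : EuclideanSpace ℝ (Fin d),
        MeasurableSet {v : EuclideanSpace ℝ (Fin d) | f (y + v) ≤ t} := fun y =>
      measurableSet_le (hf.comp ((continuous_const.add continuous_id).measurable))
        measurable_const
    have happ : ∀ y : EuclideanSpace ℝ (Fin d),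
        (gaussPi d σ) {v | f (y + v) ≤ t} =
          (Measure.pi fun _ : Fin d => gaussianReal 0 (σ.toNNReal ^ 2))
            (⇑e.symm ⁻¹' {v | f (y + v) ≤ t}) := fun y =>
      Measure.map_apply e.symm.measurable (hmeasset y)
    set h : Fin d → ℝ := fun i => x' i - x i with hh
    set A : Set (Fin d → ℝ) := ⇑e.symm ⁻¹' {v | f (x + v) ≤ t} with hAdef
    have hA : MeasurableSet A := e.symm.measurable (hmeasset x)
    have hset : ⇑e.symm ⁻¹' {v | f (x' + v) ≤ t} = (· + h) ⁻¹' A := by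
      ext w
      simp only [hAdef, Set.mem_preimage, Set.mem_setOf_eq]
      have hxw : x' + e.symm w = x + e.symm (w + h) := by
        ext i
        show x' i + w i = x i + (w i + h i)
        simp only [hh]
        ring
      rw [hxw]
    have hnorm : ‖x - x'‖ = Real.sqrt (∑ i, h i ^ 2) := by
      rw [EuclideanSpace.norm_eq]
      congr 1
      refine Finset.sum_congr rfl fun i _ => ?_
      rw [Real.norm_eq_abs, sq_abs]
      show (x i - x' i) ^ 2 = h i ^ 2
      simp only [hh]
      ring
    obtain ⟨hp0, hp1⟩ := hprob x
    rw [happ x] at hp0 hp1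
    have hcore := core hσ hA h hp0 hp1
    obtain ⟨hq0, hq1⟩ := hprob x'
    rw [happ x', hset] at hq0 hq1
    have hPhiq : PhiInv (((Measure.pi fun _ : Fin d => gaussianReal 0 (σ.toNNReal ^ 2)) A).toReal)
        - Real.sqrt (∑ i, h i ^ 2) / σ ≤
        PhiInv (((Measure.pi fun _ : Fin d => gaussianReal 0 (σ.toNNReal ^ 2))
          ((· + h) ⁻¹' A)).toReal) := by
      by_contra hcon
      push_neg at hcon
      have h2 := Phi_strictMono hcon
      rw [Phi_PhiInv hq0 hq1] at h2
      linarith [hcore]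
    rw [happ x, happ x', hset, hnorm]
    calc σ * PhiInv (((Measure.pi fun _ : Fin d => gaussianReal 0 (σ.toNNReal ^ 2)) A).toReal) -
          σ * PhiInv (((Measure.pi fun _ : Fin d => gaussianReal 0 (σ.toNNReal ^ 2))
            ((· + h) ⁻¹' A)).toReal)
        ≤ σ * (Real.sqrt (∑ i, h i ^ 2) / σ) := by
          rw [← mul_sub]
          exact mul_le_mul_of_nonneg_left (by linarith [hPhiq]) hσ.le
      _ = Real.sqrt (∑ i, h i ^ 2) := by field_simp
  intro x x'
  rw [abs_sub_le_iff]
  refine ⟨key x x', ?_⟩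
  have hk := key x' x
  rwa [norm_sub_rev] at hk
end

section
/- Let f : ℝ^d → ℝ be measurable, let p ∈ (0,1), ε ≥ 0, and set p̲ = Φ(Φ⁻¹(p) − ε/σ), so p̲ ∈ (0,1). Then for every x ∈ ℝ^d, every y ∈ ℝ with P[f(x + G) ≤ y] ≤ p̲, and every δ ∈ ℝ^d with ‖δ‖₂ ≤ ε: P[f(x + δ + G) ≤ y] ≤ p. -/
open MeasureTheory ProbabilityTheory
open MeasureTheory ProbabilityTheory Real Set Filter Topology
open scoped NNReal ENNReal

lemma Phi_mono : Monotone Phi := fun a b hab =>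
  ENNReal.toReal_mono (measure_ne_top _ _) (measure_mono (Set.Iic_subset_Iic.2 hab))

lemma gaussianReal_Ioc_pos {a b : ℝ} (hab : a < b) : 0 < gaussianReal 0 1 (Set.Ioc a b) := by
  rw [gaussianReal_of_var_ne_zero 0 one_ne_zero, pos_iff_ne_zero]
  intro h
  rw [withDensity_apply_eq_zero (measurable_gaussianPDF _ _)] at h
  have heq : {x | gaussianPDF 0 1 x ≠ 0} ∩ Set.Ioc a b = Set.Ioc a b := by
    refine inter_eq_right.2 fun x hx => ?_
    exact (gaussianPDF_pos _ one_ne_zero x).ne'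
  rw [heq, Real.volume_Ioc, ENNReal.ofReal_eq_zero] at h
  linarith

lemma Phi_add_Ioc {a b : ℝ} (hab : a ≤ b) :
    Phi b = Phi a + (gaussianReal 0 1 (Set.Ioc a b)).toReal := by
  rw [Phi, Phi, ← ENNReal.toReal_add (measure_ne_top _ _) (measure_ne_top _ _),
    ← measure_union (Set.Iic_disjoint_Ioc le_rfl) measurableSet_Ioc,
    Set.Iic_union_Ioc_eq_Iic hab]

lemma Phi_strictMono : StrictMono Phi := by
  intro a b hab
  rw [Phi_add_Ioc hab.le]
  have := gaussianReal_Ioc_pos hab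
  have h2 := ENNReal.toReal_pos this.ne' (measure_ne_top _ _)
  linarith

lemma Phi_lipschitz : LipschitzWith 1 Phi := by
  apply LipschitzWith.of_dist_le_mul
  have key : ∀ a b : ℝ, a ≤ b → Phi b - Phi a ≤ b - a := by
    intro a b hab
    rw [Phi_add_Ioc hab]
    have h1 : gaussianReal 0 1 (Set.Ioc a b) ≤ ENNReal.ofReal 1 * volume (Set.Ioc a b) := by
      rw [gaussianReal_of_var_ne_zero 0 one_ne_zero,
        withDensity_apply _ measurableSet_Ioc, ← setLIntegral_const _ _]
      refine lintegral_mono fun x => ?_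
      rw [gaussianPDF]
      refine ENNReal.ofReal_le_ofReal ?_
      rw [gaussianPDFReal]
      simp only [NNReal.coe_one, mul_one, sub_zero]
      have h2 : rexp (-x ^ 2 / 2) ≤ 1 := by
        rw [Real.exp_le_one_iff]
        have : (0:ℝ) ≤ x ^ 2 := sq_nonneg _
        nlinarith
      have h3 : (Real.sqrt (2 * π))⁻¹ ≤ 1 := by
        rw [inv_le_one_iff₀]
        right
        rw [Real.le_sqrt' one_pos]
        nlinarith [Real.pi_gt_three]
      calc (Real.sqrt (2 * π))⁻¹ * rexp (-x ^ 2 / 2)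
          ≤ 1 * 1 := mul_le_mul h3 h2 (Real.exp_nonneg _) (by norm_num)
        _ = 1 := by norm_num
    have h2 := ENNReal.toReal_mono
      (ENNReal.mul_ne_top ENNReal.ofReal_ne_top (by rw [Real.volume_Ioc]; exact ENNReal.ofReal_ne_top)) h1
    rw [ENNReal.toReal_mul, Real.volume_Ioc, ENNReal.toReal_ofReal (by norm_num),
      ENNReal.toReal_ofReal (by linarith)] at h2
    linarith
  intro a b
  rcases le_total a b with h | h
  · rw [Real.dist_eq, Real.dist_eq, abs_of_nonpos (by have := Phi_mono h; linarith),
      abs_of_nonpos (by linarith)]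
    have := key a b h
    push_cast
    linarith
  · rw [Real.dist_eq, Real.dist_eq, abs_of_nonneg (by have := Phi_mono h; linarith),
      abs_of_nonneg (by linarith)]
    have := key b a h
    push_cast
    linarith

lemma Phi_continuous : Continuous Phi := Phi_lipschitz.continuous

lemma gauss_Ici_eq_Iic_neg (V : ℝ≥0) (t : ℝ) :
    gaussianReal 0 V (Set.Ici t) = gaussianReal 0 V (Set.Iic (-t)) := by
  have hmap0 := gaussianReal_map_const_mul (μ := 0) (v := V) (-1)
  have hmap : (gaussianReal 0 V).map ((-1:ℝ) * ·) = gaussianReal 0 V := by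
    rw [hmap0]
    congr 1
    · ring
    · apply NNReal.coe_injective
      rw [NNReal.coe_mul, NNReal.coe_mk]
      norm_num
  calc gaussianReal 0 V (Set.Ici t)
      = ((gaussianReal 0 V).map ((-1 : ℝ) * ·)) (Set.Ici t) := by rw [hmap]
    _ = gaussianReal 0 V (((-1:ℝ) * ·) ⁻¹' (Set.Ici t)) :=
        Measure.map_apply (measurable_id'.const_mul _) measurableSet_Ici
    _ = gaussianReal 0 V (Set.Iic (-t)) := by
        congr 1
        ext x
        simp only [Set.mem_preimage, Set.mem_Ici, Set.mem_Iic]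
        constructor <;> intro <;> linarith

lemma gaussianReal_singleton (s : ℝ) : gaussianReal 0 1 {s} = 0 := by
  rw [gaussianReal_of_var_ne_zero 0 one_ne_zero,
    withDensity_apply _ (measurableSet_singleton s), Measure.restrict_singleton]
  simp

lemma Phi_neg (s : ℝ) : Phi (-s) = 1 - Phi s := by
  have h1 : gaussianReal 0 1 (Set.Iic (-s)) = gaussianReal 0 1 (Set.Ici s) :=
    (gauss_Ici_eq_Iic_neg 1 s).symm
  have h2 : gaussianReal 0 1 (Set.Ici s) = 1 - gaussianReal 0 1 (Set.Iio s) := by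
    rw [← Set.compl_Iio, measure_compl measurableSet_Iio (measure_ne_top _ _), measure_univ]
  have h3 : gaussianReal 0 1 (Set.Iio s) = gaussianReal 0 1 (Set.Iic s) :=
    measure_congr (Iio_ae_eq_Iic' (gaussianReal_singleton s))
  rw [Phi, h1, h2, h3, ENNReal.toReal_sub_of_le prob_le_one (by norm_num), ENNReal.toReal_one, Phi]

lemma Phi_tendsto_atTop : Tendsto Phi atTop (𝓝 1) := by
  have h := tendsto_measure_Iic_atTop (gaussianReal 0 1)
  rw [measure_univ] at h
  have h2 := (ENNReal.tendsto_toReal (by norm_num : (1:ℝ≥0∞) ≠ ⊤)).comp h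
  simp only [Function.comp_def, ENNReal.toReal_one] at h2
  exact h2

lemma Phi_tendsto_atBot : Tendsto Phi atBot (𝓝 0) := by
  have heq : Phi = fun s => 1 - Phi (-s) := by
    funext s
    rw [Phi_neg, sub_sub_cancel]
  rw [heq]
  have h1 : Tendsto (fun s : ℝ => Phi (-s)) atBot (𝓝 1) :=
    Phi_tendsto_atTop.comp tendsto_neg_atBot_atTop
  simpa using (tendsto_const_nhds (x := (1:ℝ))).sub h1

lemma Phi_PhiInv {q : ℝ} (h0 : 0 < q) (h1 : q < 1) : Phi (PhiInv q) = q := by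
  obtain ⟨a, ha⟩ := (Phi_tendsto_atBot.eventually_lt_const h0).exists
  obtain ⟨b, hb⟩ := (Phi_tendsto_atTop.eventually_const_lt h1).exists
  have hab : a ≤ b := by
    by_contra h
    push_neg at h
    have := Phi_mono h.le
    linarith
  obtain ⟨s, _, hs⟩ := intermediate_value_Icc hab Phi_continuous.continuousOn ⟨ha.le, hb.le⟩
  exact Function.invFun_eq ⟨s, hs⟩

lemma coe_toNNReal_sq {σ : ℝ} (hσ : 0 < σ) : ((σ.toNNReal ^ 2 : ℝ≥0) : ℝ) = σ ^ 2 := by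
  push_cast
  rw [Real.coe_toNNReal _ hσ.le]

lemma toNNReal_sq_ne_zero {σ : ℝ} (hσ : 0 < σ) : σ.toNNReal ^ 2 ≠ 0 := by
  have : σ.toNNReal ≠ 0 := by
    rw [ne_eq, Real.toNNReal_eq_zero]
    linarith
  positivity

lemma gauss_Iic {σ : ℝ} (hσ : 0 < σ) (s : ℝ) :
    gaussianReal 0 (σ.toNNReal ^ 2) (Set.Iic s) = ENNReal.ofReal (Phi (s / σ)) := by
  have hmap0 := gaussianReal_map_const_mul (μ := 0) (v := 1) σ
  have hmap : Measure.map (σ * ·) (gaussianReal 0 1) = gaussianReal 0 (σ.toNNReal ^ 2) := by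
    rw [hmap0]
    congr 1
    · ring
    · apply NNReal.coe_injective
      rw [NNReal.coe_mul, NNReal.coe_mk, NNReal.coe_one, coe_toNNReal_sq hσ]
      ring
  rw [← hmap, Measure.map_apply (measurable_id'.const_mul σ) measurableSet_Iic]
  have hpre : ((σ * ·) ⁻¹' Set.Iic s) = Set.Iic (s / σ) := by
    ext x
    simp only [Set.mem_preimage, Set.mem_Iic]
    rw [le_div_iff₀ hσ, mul_comm]
  rw [hpre, Phi, ENNReal.ofReal_toReal (measure_ne_top _ _)]

lemma gauss_Ici {σ : ℝ} (hσ : 0 < σ) (t : ℝ) :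
    gaussianReal 0 (σ.toNNReal ^ 2) (Set.Ici t) = ENNReal.ofReal (Phi (-t / σ)) := by
  rw [gauss_Ici_eq_Iic_neg, gauss_Iic hσ]

lemma lintegral_pi_prod : ∀ (n : ℕ) (μ : Fin n → Measure ℝ), (∀ i, SigmaFinite (μ i)) →
    ∀ (h : Fin n → ℝ → ℝ≥0∞), (∀ i, Measurable (h i)) →
    ∫⁻ v, ∏ i, h i (v i) ∂Measure.pi μ = ∏ i, ∫⁻ x, h i x ∂μ i := by
  intro n
  induction n with
  | zero =>
      intro μ _ h _
      simp [Measure.pi_of_empty (β := fun _ : Fin 0 => ℝ) μ]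
  | succ n ih =>
      intro μ hsf h hm
      haveI := hsf
      have mp := measurePreserving_piFinSuccAbove μ 0
      set e := MeasurableEquiv.piFinSuccAbove (fun _ : Fin (n+1) => ℝ) 0 with he
      have hg : Measurable (fun q : ℝ × (Fin n → ℝ) => h 0 q.1 * ∏ j, h j.succ (q.2 j)) := by
        apply Measurable.mul
        · exact (hm 0).comp measurable_fst
        · apply Finset.measurable_prod
          intro j _
          exact (hm j.succ).comp ((measurable_pi_apply j).comp measurable_snd)
      have key : ∀ v : Fin (n+1) → ℝ,
          (∏ i, h i (v i)) = (fun q : ℝ × (Fin n → ℝ) => h 0 q.1 * ∏ j, h j.succ (q.2 j)) (e v) := by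
        intro v
        show _ = h 0 (e v).1 * ∏ j, h j.succ ((e v).2 j)
        have h2 : ∀ j : Fin n, (e v).2 j = v j.succ := by
          intro j
          show v ((0 : Fin (n+1)).succAbove j) = v j.succ
          rw [Fin.succAbove_zero]
        rw [Fin.prod_univ_succ]
        refine congrArg₂ (· * ·) rfl (Finset.prod_congr rfl fun j _ => ?_)
        rw [h2 j]
      calc ∫⁻ v, ∏ i, h i (v i) ∂Measure.pi μ
          = ∫⁻ v, (fun q : ℝ × (Fin n → ℝ) => h 0 q.1 * ∏ j, h j.succ (q.2 j)) (e v)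
              ∂Measure.pi μ := by
            apply lintegral_congr
            exact key
        _ = ∫⁻ q, h 0 q.1 * ∏ j, h j.succ (q.2 j)
              ∂((μ 0).prod (Measure.pi fun j => μ ((0 : Fin (n+1)).succAbove j))) := by
            rw [← mp.map_eq, lintegral_map hg e.measurable]
        _ = (∫⁻ x, h 0 x ∂μ 0) * ∫⁻ z, ∏ j, h j.succ (z j)
              ∂(Measure.pi fun j => μ ((0 : Fin (n+1)).succAbove j)) := by
            exact lintegral_prod_mul ((hm 0).aemeasurable)
              ((Finset.measurable_prod _ fun (j : Fin n) _ =>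
                (hm j.succ).comp (measurable_pi_apply j)).aemeasurable)
        _ = ∏ i, ∫⁻ x, h i x ∂μ i := by
            have : (fun j : Fin n => μ ((0 : Fin (n+1)).succAbove j)) = fun j => μ j.succ := by
              funext j
              rw [Fin.succAbove_zero]
            rw [this, ih _ (fun j => hsf j.succ) _ (fun j => hm j.succ), Fin.prod_univ_succ]

lemma pi_withDensity (n : ℕ) (μ : Fin n → Measure ℝ) [∀ i, SigmaFinite (μ i)]
    (f : Fin n → ℝ → ℝ≥0∞) (hf : ∀ i, Measurable (f i))
    (hsf : ∀ i, SigmaFinite ((μ i).withDensity (f i))) :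
    Measure.pi (fun i => (μ i).withDensity (f i)) =
      (Measure.pi μ).withDensity (fun v => ∏ i, f i (v i)) := by
  haveI := hsf
  refine Measure.pi_eq fun s hs => ?_
  have hmeas : Measurable (fun v : Fin n → ℝ => ∏ i, f i (v i)) :=
    Finset.measurable_prod _ fun i _ => (hf i).comp (measurable_pi_apply i)
  rw [withDensity_apply _ (MeasurableSet.univ_pi hs),
    ← lintegral_indicator (MeasurableSet.univ_pi hs)]
  have hind : (Set.univ.pi s).indicator (fun v => ∏ i, f i (v i)) =
      fun v => ∏ i, (s i).indicator (f i) (v i) := by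
    funext v
    by_cases hv : v ∈ Set.univ.pi s
    · rw [Set.indicator_of_mem hv]
      exact Finset.prod_congr rfl fun i _ => (Set.indicator_of_mem (hv i trivial) _).symm
    · rw [Set.indicator_of_notMem hv]
      rw [Set.mem_univ_pi] at hv
      push_neg at hv
      obtain ⟨i, hi⟩ := hv
      exact (Finset.prod_eq_zero (Finset.mem_univ i) (Set.indicator_of_notMem hi _)).symm
  rw [hind, lintegral_pi_prod n μ inferInstance _ (fun i => (hf i).indicator (hs i))]
  exact Finset.prod_congr rfl fun i _ => by
    rw [lintegral_indicator (hs i), withDensity_apply _ (hs i)]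

lemma pi_eval_zero {n : ℕ} (ν : Measure ℝ) [IsProbabilityMeasure ν] (S : Set ℝ)
    (hS : MeasurableSet S) :
    Measure.pi (fun _ : Fin (n+1) => ν) {v | v 0 ∈ S} = ν S := by
  have hset : {v : Fin (n+1) → ℝ | v 0 ∈ S} =
      Set.univ.pi (fun i => if i = 0 then S else Set.univ) := by
    ext v
    simp only [Set.mem_setOf_eq, Set.mem_univ_pi]
    constructor
    · intro hv i
      by_cases hi : i = 0
      · subst hi; simpa using hv
      · simp [hi]
    · intro hv
      have := hv 0
      simpa using this
  rw [hset, Measure.pi_pi]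
  have : ∀ i : Fin (n+1), ν (if i = 0 then S else Set.univ) = if i = 0 then ν S else 1 := by
    intro i
    by_cases hi : i = 0 <;> simp [hi]
  rw [Finset.prod_congr rfl fun i _ => this i, Fin.prod_univ_succ]
  simp [Fin.succ_ne_zero]

lemma gauss_shift {σ : ℝ} (hσ : 0 < σ) (c : ℝ) :
    gaussianReal c (σ.toNNReal ^ 2) = (gaussianReal 0 (σ.toNNReal ^ 2)).withDensity
      (fun t => ENNReal.ofReal (rexp ((c * t - c ^ 2 / 2) / σ ^ 2))) := by
  have hV : σ.toNNReal ^ 2 ≠ 0 := by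
    have : σ.toNNReal ≠ 0 := by
      rw [ne_eq, Real.toNNReal_eq_zero]; linarith
    positivity
  have hL : Measurable fun t : ℝ => ENNReal.ofReal (rexp ((c * t - c ^ 2 / 2) / σ ^ 2)) := by
    apply Measurable.ennreal_ofReal
    exact (((measurable_id.const_mul c).sub_const _).div_const _).exp
  rw [gaussianReal_of_var_ne_zero _ hV, gaussianReal_of_var_ne_zero _ hV,
    ← withDensity_mul _ (measurable_gaussianPDF _ _) hL]
  congr 1
  funext t
  rw [Pi.mul_apply, gaussianPDF, gaussianPDF, ← ENNReal.ofReal_mul (gaussianPDFReal_nonneg _ _ _)]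
  congr 1
  have hcoe : ((σ.toNNReal ^ 2 : ℝ≥0) : ℝ) = σ ^ 2 := by
    push_cast
    rw [Real.coe_toNNReal _ hσ.le]
  rw [gaussianPDFReal, gaussianPDFReal]
  simp only [hcoe]
  rw [mul_assoc (√(2 * π * σ ^ 2))⁻¹]
  congr 1
  rw [← Real.exp_add]
  congr 1
  have hσ2 : σ ^ 2 ≠ 0 := by positivity
  field_simp
  ring

lemma np_compare {α : Type*} [MeasurableSpace α] (P : Measure α) [IsFiniteMeasure P]
    (κ : α → ℝ≥0∞) (hκ : Measurable κ) (C H : Set α) (hC : MeasurableSet C)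
    (hH : MeasurableSet H) (hCH : P C ≤ P H) (k : ℝ≥0∞)
    (hlow : ∀ v ∈ H, k ≤ κ v) (hupp : ∀ v ∉ H, κ v ≤ k) :
    ∫⁻ v in C, κ v ∂P ≤ ∫⁻ v in H, κ v ∂P := by
  have hsplitC : ∫⁻ v in C, κ v ∂P = ∫⁻ v in C ∩ H, κ v ∂P + ∫⁻ v in C \ H, κ v ∂P := by
    conv_lhs => rw [← Set.inter_union_diff C H]
    exact lintegral_union (hC.diff hH) (Set.disjoint_sdiff_right.mono_left Set.inter_subset_right)
  have hsplitH : ∫⁻ v in H, κ v ∂P = ∫⁻ v in C ∩ H, κ v ∂P + ∫⁻ v in H \ C, κ v ∂P := by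
    conv_lhs => rw [← Set.inter_union_diff H C, Set.inter_comm H C]
    exact lintegral_union (hH.diff hC) (Set.disjoint_sdiff_right.mono_left Set.inter_subset_left)
  rw [hsplitC, hsplitH]
  refine add_le_add le_rfl ?_
  have hmeas_ineq : P (C \ H) ≤ P (H \ C) := by
    have h1 : P (C ∩ H) + P (C \ H) = P C := measure_inter_add_diff C hH
    have h2 : P (C ∩ H) + P (H \ C) = P H := by
      rw [Set.inter_comm]
      exact measure_inter_add_diff H hC
    have h3 : P (C ∩ H) + P (C \ H) ≤ P (C ∩ H) + P (H \ C) := by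
      rw [h1, h2]; exact hCH
    exact ENNReal.le_of_add_le_add_left (measure_ne_top P _) h3
  calc ∫⁻ v in C \ H, κ v ∂P
      ≤ ∫⁻ _ in C \ H, k ∂P := by
        refine setLIntegral_mono' (hC.diff hH) fun v hv => hupp v hv.2
    _ = k * P (C \ H) := by rw [setLIntegral_const]
    _ ≤ k * P (H \ C) := mul_le_mul_right hmeas_ineq k
    _ = ∫⁻ _ in H \ C, k ∂P := by rw [setLIntegral_const]
    _ ≤ ∫⁻ v in H \ C, κ v ∂P := by
        refine setLIntegral_mono' (hH.diff hC) fun v hv => hlow v hv.1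

lemma map_withDensity_equiv {α β : Type*} [MeasurableSpace α] [MeasurableSpace β]
    (e : α ≃ᵐ β) (μ : Measure α) (g : β → ℝ≥0∞) (hg : Measurable g) :
    Measure.map e (μ.withDensity (g ∘ e)) = (Measure.map e μ).withDensity g := by
  ext s hs
  rw [Measure.map_apply e.measurable hs, withDensity_apply _ (e.measurable hs),
    withDensity_apply _ hs, setLIntegral_map hs hg e.measurable]
  rfl



lemma gaussPi_eq_withDensity (d : ℕ) {σ : ℝ} (hσ : 0 < σ) :
    gaussPi d σ = (volume : Measure (EuclideanSpace ℝ (Fin d))).withDensity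
      (fun v => ENNReal.ofReal ((√(2 * π * σ ^ 2))⁻¹ ^ d * rexp (-‖v‖ ^ 2 / (2 * σ ^ 2)))) := by
  have hV : σ.toNNReal ^ 2 ≠ 0 := toNNReal_sq_ne_zero hσ
  have hcoe := coe_toNNReal_sq hσ
  have hs : ∀ _ : Fin d,
      SigmaFinite ((volume : Measure ℝ).withDensity (gaussianPDF 0 (σ.toNNReal ^ 2))) := by
    intro i
    rw [← gaussianReal_of_var_ne_zero 0 hV]
    infer_instance
  have hpi : (Measure.pi fun _ : Fin d => gaussianReal 0 (σ.toNNReal ^ 2)) =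
      (volume : Measure (Fin d → ℝ)).withDensity
        (fun u => ∏ i, gaussianPDF 0 (σ.toNNReal ^ 2) (u i)) := by
    have h1 : (fun _ : Fin d => gaussianReal 0 (σ.toNNReal ^ 2)) =
        fun _ : Fin d => (volume : Measure ℝ).withDensity (gaussianPDF 0 (σ.toNNReal ^ 2)) := by
      funext i
      rw [gaussianReal_of_var_ne_zero 0 hV]
    rw [h1, pi_withDensity d _ _ (fun i => measurable_gaussianPDF _ _) hs, ← volume_pi]
  have hF : Measurable (fun u : Fin d → ℝ => ∏ i, gaussianPDF 0 (σ.toNNReal ^ 2) (u i)) :=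
    Finset.measurable_prod _ fun i _ =>
      (measurable_gaussianPDF _ _).comp (measurable_pi_apply i)
  have hvol : Measure.map (MeasurableEquiv.toLp 2 (Fin d → ℝ)).symm
      (volume : Measure (EuclideanSpace ℝ (Fin d))) = volume :=
    (EuclideanSpace.volume_preserving_symm_measurableEquiv_toLp (Fin d)).map_eq
  have hstep : gaussPi d σ = (volume : Measure (EuclideanSpace ℝ (Fin d))).withDensity
      ((fun u : Fin d → ℝ => ∏ i, gaussianPDF 0 (σ.toNNReal ^ 2) (u i)) ∘ (MeasurableEquiv.toLp 2 (Fin d → ℝ)).symm) := by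
    rw [gaussPi, hpi, ← hvol,
      ← map_withDensity_equiv (MeasurableEquiv.toLp 2 (Fin d → ℝ)).symm _ _ hF,
      MeasurableEquiv.map_map_symm]
  rw [hstep]
  congr 1
  funext v
  show (∏ i, gaussianPDF 0 (σ.toNNReal ^ 2) ((MeasurableEquiv.toLp 2 (Fin d → ℝ)).symm v i)) = _
  have hev : ∀ i, (MeasurableEquiv.toLp 2 (Fin d → ℝ)).symm v i = v i := fun i => rfl
  simp only [hev]
  rw [gaussianPDF_def]
  rw [← ENNReal.ofReal_prod_of_nonneg (fun i _ => gaussianPDFReal_nonneg _ _ _)]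
  congr 1
  simp only [gaussianPDFReal, hcoe]
  rw [Finset.prod_mul_distrib, Finset.prod_const, Finset.card_univ, Fintype.card_fin,
    ← Real.exp_sum]
  congr 1
  have hnorm : ‖v‖ ^ 2 = ∑ i, v i ^ 2 := by
    rw [EuclideanSpace.norm_eq, Real.sq_sqrt (by positivity)]
    simp [Real.norm_eq_abs, sq_abs]
  simp only [sub_zero, neg_div]
  rw [Finset.sum_neg_distrib, ← Finset.sum_div, hnorm]

lemma gaussPi_map_isometry (d : ℕ) {σ : ℝ} (hσ : 0 < σ)
    (R : EuclideanSpace ℝ (Fin d) ≃ₗᵢ[ℝ] EuclideanSpace ℝ (Fin d)) :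
    Measure.map R (gaussPi d σ) = gaussPi d σ := by
  rw [gaussPi_eq_withDensity d hσ]
  set g := fun v : EuclideanSpace ℝ (Fin d) =>
    ENNReal.ofReal ((√(2 * π * σ ^ 2))⁻¹ ^ d * rexp (-‖v‖ ^ 2 / (2 * σ ^ 2))) with hgdef
  have hg : Measurable g := by
    apply Measurable.ennreal_ofReal
    exact measurable_const.mul (((measurable_norm.pow_const 2).neg.div_const _).exp)
  have hcomp : g ∘ R.toMeasurableEquiv = g := by
    funext v
    simp only [Function.comp_apply, hgdef, LinearIsometryEquiv.coe_toMeasurableEquiv]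
    rw [R.norm_map]
  have hco : (⇑R.toMeasurableEquiv : EuclideanSpace ℝ (Fin d) → EuclideanSpace ℝ (Fin d)) = ⇑R := rfl
  calc Measure.map (⇑R) ((volume : Measure (EuclideanSpace ℝ (Fin d))).withDensity g)
      = Measure.map R.toMeasurableEquiv (volume.withDensity (g ∘ R.toMeasurableEquiv)) := by
        rw [hcomp, hco]
    _ = (Measure.map R.toMeasurableEquiv volume).withDensity g :=
        map_withDensity_equiv _ _ _ hg
    _ = (volume : Measure (EuclideanSpace ℝ (Fin d))).withDensity g := by
        rw [hco, R.measurePreserving.map_eq]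

lemma key_pi {n : ℕ} {σ : ℝ} (hσ : 0 < σ) {c : ℝ} (hc : 0 ≤ c) (t : ℝ)
    (C : Set (Fin (n+1) → ℝ)) (hC : MeasurableSet C)
    (hCH : Measure.pi (fun _ : Fin (n+1) => gaussianReal 0 (σ.toNNReal ^ 2)) C ≤
      gaussianReal 0 (σ.toNNReal ^ 2) (Set.Ici t)) :
    Measure.map (· + fun i => if i = 0 then c else 0)
      (Measure.pi fun _ : Fin (n+1) => gaussianReal 0 (σ.toNNReal ^ 2)) C ≤
      gaussianReal 0 (σ.toNNReal ^ 2) (Set.Ici (t - c)) := by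
  set ν := gaussianReal 0 (σ.toNNReal ^ 2) with hν
  set w : Fin (n+1) → ℝ := fun i => if i = 0 then c else 0 with hw
  set L : ℝ → ℝ≥0∞ := fun s => ENNReal.ofReal (rexp ((c * s - c ^ 2 / 2) / σ ^ 2)) with hL
  have hσ2 : (0:ℝ) < σ ^ 2 := by positivity
  have hLmeas : Measurable L := by
    apply Measurable.ennreal_ofReal
    exact (((measurable_id.const_mul c).sub_const _).div_const _).exp
  have hLmono : Monotone L := by
    intro a b hab
    refine ENNReal.ofReal_le_ofReal (Real.exp_le_exp.2 ?_)
    have : c * a ≤ c * b := mul_le_mul_of_nonneg_left hab hc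
    apply div_le_div_of_nonneg_right ?_ hσ2.le
    linarith
  have hmadd : Measurable (fun a : Fin (n+1) → ℝ => a + w) :=
    measurable_id.add_const w
  have h1 : Measure.map (· + w) (Measure.pi fun _ : Fin (n+1) => ν) =
      Measure.pi (fun i : Fin (n+1) => gaussianReal (w i) (σ.toNNReal ^ 2)) := by
    have hmp : ∀ i : Fin (n+1),
        MeasurePreserving (· + w i) ν (gaussianReal (w i) (σ.toNNReal ^ 2)) := fun i =>
      ⟨measurable_add_const _, by rw [hν, gaussianReal_map_add_const, zero_add]⟩
    exact (measurePreserving_pi _ _ hmp).map_eq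
  have h2 : ∀ i : Fin (n+1), gaussianReal (w i) (σ.toNNReal ^ 2) =
      ν.withDensity (fun s => if i = 0 then L s else 1) := by
    intro i
    by_cases hi : i = 0
    · subst hi
      have he1 : (fun s => if (0 : Fin (n+1)) = 0 then L s else 1) = L := by
        funext s
        rw [if_pos rfl]
      have he2 : w 0 = c := by simp [hw]
      rw [he1, he2, hν]
      exact gauss_shift hσ c
    · have hwi : w i = 0 := by simp [hw, hi]
      have he1 : (fun s => if i = 0 then L s else 1) = (1 : ℝ → ℝ≥0∞) := by
        funext s
        rw [if_neg hi]
        rfl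
      rw [hwi, he1, withDensity_one]
  have hsf : ∀ i : Fin (n+1), SigmaFinite (ν.withDensity (fun s => if i = 0 then L s else 1)) := by
    intro i
    rw [← h2 i]
    infer_instance
  have hitem : ∀ i : Fin (n+1), Measurable (fun s : ℝ => if i = 0 then L s else 1) := by
    intro i
    by_cases hi : i = 0 <;> simp [hi, hLmeas]
  have h3 : Measure.map (· + w) (Measure.pi fun _ : Fin (n+1) => ν) =
      (Measure.pi fun _ : Fin (n+1) => ν).withDensity (fun v => L (v 0)) := by
    rw [h1]
    have hrw : (fun i : Fin (n+1) => gaussianReal (w i) (σ.toNNReal ^ 2)) =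
        fun i => ν.withDensity (fun s => if i = 0 then L s else 1) := funext h2
    rw [hrw, pi_withDensity (n+1) _ _ hitem hsf]
    congr 1
    funext v
    rw [Fin.prod_univ_succ]
    have : ∀ j : Fin n, (if (Fin.succ j : Fin (n+1)) = 0 then L (v j.succ) else 1) = 1 := by
      intro j
      rw [if_neg (Fin.succ_ne_zero j)]
    rw [Finset.prod_congr rfl fun j _ => this j, Finset.prod_const_one, mul_one, if_pos rfl]
  set H : Set (Fin (n+1) → ℝ) := {v | t ≤ v 0} with hHdef
  have hHmeas : MeasurableSet H := measurableSet_le measurable_const (measurable_pi_apply 0)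
  have hπH : Measure.pi (fun _ : Fin (n+1) => ν) H = ν (Set.Ici t) :=
    pi_eval_zero ν (Set.Ici t) measurableSet_Ici
  have hNP : (Measure.pi fun _ : Fin (n+1) => ν).withDensity (fun v => L (v 0)) C ≤
      (Measure.pi fun _ : Fin (n+1) => ν).withDensity (fun v => L (v 0)) H := by
    rw [withDensity_apply _ hC, withDensity_apply _ hHmeas]
    refine np_compare _ _ (hLmeas.comp (measurable_pi_apply 0)) C H hC hHmeas ?_ (L t) ?_ ?_
    · rw [hπH]
      exact hCH
    · intro v hv
      exact hLmono hv
    · intro v hv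
      exact hLmono (not_le.1 hv).le
  have hmapH : Measure.map (· + w) (Measure.pi fun _ : Fin (n+1) => ν) H =
      ν (Set.Ici (t - c)) := by
    rw [Measure.map_apply hmadd hHmeas]
    have hpre : ((· + w) ⁻¹' H) = {v : Fin (n+1) → ℝ | v 0 ∈ Set.Ici (t - c)} := by
      ext v
      simp only [Set.mem_preimage, hHdef, Set.mem_setOf_eq, Set.mem_Ici]
      have : (v + w) 0 = v 0 + c := by simp [hw]
      rw [this, sub_le_iff_le_add]
    rw [hpre, pi_eval_zero ν _ measurableSet_Ici]
  calc Measure.map (· + w) (Measure.pi fun _ : Fin (n+1) => ν) C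
      = (Measure.pi fun _ : Fin (n+1) => ν).withDensity (fun v => L (v 0)) C := by rw [h3]
    _ ≤ (Measure.pi fun _ : Fin (n+1) => ν).withDensity (fun v => L (v 0)) H := hNP
    _ = Measure.map (· + w) (Measure.pi fun _ : Fin (n+1) => ν) H := by rw [h3]
    _ = ν (Set.Ici (t - c)) := hmapH

/-- For measurable `f`, `p ∈ (0,1)`, `ε ≥ 0`, and
`p̲ = Φ(Φ⁻¹(p) − ε/σ)`: if `P[f(x + G) ≤ y] ≤ p̲`, then for every `δ` with
`‖δ‖₂ ≤ ε` we have `P[f(x + δ + G) ≤ y] ≤ p`. -/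
theorem prob_le_of_perturbed (d : ℕ) (hd : 1 ≤ d) (σ : ℝ) (hσ : 0 < σ)
    (f : EuclideanSpace ℝ (Fin d) → ℝ) (hf : Measurable f)
    (p : ℝ) (hp0 : 0 < p) (hp1 : p < 1) (ε : ℝ) (hε : 0 ≤ ε)
    (plow : ℝ) (hplow : plow = Phi (PhiInv p - ε / σ)) :
    ∀ x : EuclideanSpace ℝ (Fin d), ∀ y : ℝ,
      ((gaussPi d σ) {v | f (x + v) ≤ y}).toReal ≤ plow →
      ∀ δ : EuclideanSpace ℝ (Fin d), ‖δ‖ ≤ ε →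
        ((gaussPi d σ) {v | f (x + δ + v) ≤ y}).toReal ≤ p := by
  intro x y hA δ hδ
  obtain ⟨n, rfl⟩ := Nat.exists_eq_succ_of_ne_zero (Nat.one_le_iff_ne_zero.mp hd)
  have hσ2 : σ ≠ 0 := hσ.ne'
  set μ := gaussPi (n+1) σ with hμ
  set A := {v : EuclideanSpace ℝ (Fin (n+1)) | f (x + v) ≤ y} with hAdef
  have hAm : MeasurableSet A :=
    measurableSet_le (hf.comp (measurable_const.add measurable_id)) measurable_const
  have hmaδ : Measurable (fun v : EuclideanSpace ℝ (Fin (n+1)) => v + δ) :=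
    (continuous_add_right δ).measurable
  have hgoal1 : μ {v | f (x + δ + v) ≤ y} = Measure.map (· + δ) μ A := by
    rw [Measure.map_apply hmaδ hAm]
    congr 1
    ext v
    simp only [Set.mem_setOf_eq, Set.mem_preimage, hAdef]
    rw [show x + (v + δ) = x + δ + v by abel]
  set u : EuclideanSpace ℝ (Fin (n+1)) := EuclideanSpace.single 0 ‖δ‖ with hu
  have hnorm_u : ‖u‖ = ‖δ‖ := by
    rw [hu, EuclideanSpace.norm_single, norm_norm]
  set R := Submodule.reflection (ℝ ∙ (u - δ))ᗮ with hR
  have hRu : R u = δ := Submodule.reflection_sub hnorm_u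
  have hRmeas : Measurable ⇑R := R.continuous.measurable
  have hRsymmmeas : Measurable ⇑R.symm := R.symm.continuous.measurable
  have hmau : Measurable (fun v : EuclideanSpace ℝ (Fin (n+1)) => v + u) :=
    (continuous_add_right u).measurable
  have hcomp : (fun v : EuclideanSpace ℝ (Fin (n+1)) => v + δ)
      = ⇑R ∘ (fun v => v + u) ∘ ⇑R.symm := by
    funext v
    simp only [Function.comp_apply, map_add, LinearIsometryEquiv.apply_symm_apply, hRu]
  have hmap1 : Measure.map (· + δ) μ = Measure.map ⇑R (Measure.map (· + u) μ) := by
    rw [hcomp, ← Measure.map_map hRmeas (hmau.comp hRsymmmeas)]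
    congr 1
    rw [← Measure.map_map hmau hRsymmmeas]
    congr 1
    rw [hμ]
    exact gaussPi_map_isometry (n+1) hσ R.symm
  set A' := ⇑R ⁻¹' A with hA'
  have hA'm : MeasurableSet A' := hRmeas hAm
  have hμA' : μ A' = μ A := by
    rw [hA', ← Measure.map_apply hRmeas hAm, gaussPi_map_isometry (n+1) hσ R]
  have hstep1 : Measure.map (· + δ) μ A = Measure.map (· + u) μ A' := by
    rw [hmap1, Measure.map_apply hRmeas hAm]
  -- to pi space
  set m := Measure.pi fun _ : Fin (n+1) => gaussianReal 0 (σ.toNNReal ^ 2) with hm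
  haveI : IsProbabilityMeasure m := by
    constructor
    rw [hm, Measure.pi_univ]
    simp
  set w : Fin (n+1) → ℝ := fun i => if i = 0 then ‖δ‖ else 0 with hw
  have hmadd : Measurable (fun a : Fin (n+1) → ℝ => a + w) :=
    measurable_id.add_const w
  have hshift : (fun v : EuclideanSpace ℝ (Fin (n+1)) => v + u)
        ∘ ⇑(MeasurableEquiv.toLp 2 (Fin (n+1) → ℝ))
      = ⇑(MeasurableEquiv.toLp 2 (Fin (n+1) → ℝ)) ∘ (fun a => a + w) := by
    funext a
    apply PiLp.ext
    intro i
    show ((MeasurableEquiv.toLp 2 (Fin (n+1) → ℝ)) a) i + u i = a i + w i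
    congr 1
    rw [hu, hw, EuclideanSpace.single_apply]
  have hmap2 : Measure.map (· + u) μ
      = Measure.map (MeasurableEquiv.toLp 2 (Fin (n+1) → ℝ))
          (Measure.map (· + w) m) := by
    rw [hμ, gaussPi, Measure.map_map hmau (MeasurableEquiv.measurable _),
      Measure.map_map (MeasurableEquiv.measurable _) hmadd]
    congr 1
  set C := ⇑(MeasurableEquiv.toLp 2 (Fin (n+1) → ℝ)) ⁻¹' A' with hC
  have hCm : MeasurableSet C := (MeasurableEquiv.measurable _) hA'm
  have hstep2 : Measure.map (· + u) μ A' = Measure.map (· + w) m C := by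
    rw [hmap2, Measure.map_apply (MeasurableEquiv.measurable _) hA'm]
  have hmCeq : m C = μ A' := by
    rw [hμ, gaussPi, Measure.map_apply (MeasurableEquiv.measurable _) hA'm]
  -- choose threshold
  set t := -σ * (PhiInv p - ε / σ) with ht
  have hCH : m C ≤ gaussianReal 0 (σ.toNNReal ^ 2) (Set.Ici t) := by
    have h2 : (m C).toReal ≤ plow := by
      rw [hmCeq, hμA']
      exact hA
    have h3 : -t / σ = PhiInv p - ε / σ := by
      rw [ht]
      field_simp
    rw [gauss_Ici hσ, h3, ← hplow,
      ← ENNReal.ofReal_toReal (measure_ne_top m C)]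
    exact ENNReal.ofReal_le_ofReal h2
  have hkey := key_pi hσ (norm_nonneg δ) t C hCm hCH
  have hfinal : Measure.map (· + w) m C ≤ ENNReal.ofReal p := by
    refine le_trans ?_ (ENNReal.ofReal_le_ofReal ?_ : ENNReal.ofReal (Phi (-(t - ‖δ‖) / σ)) ≤ _)
    · rw [← gauss_Ici hσ]
      exact hkey
    · have harg : -(t - ‖δ‖) / σ = PhiInv p - ε / σ + ‖δ‖ / σ := by
        rw [ht]
        field_simp
        ring
      rw [harg]
      calc Phi (PhiInv p - ε / σ + ‖δ‖ / σ)
          ≤ Phi (PhiInv p) := by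
            apply Phi_mono
            have : ‖δ‖ / σ ≤ ε / σ := div_le_div_of_nonneg_right hδ hσ.le
            linarith
        _ = p := Phi_PhiInv hp0 hp1
  have hchain : μ {v | f (x + δ + v) ≤ y} ≤ ENNReal.ofReal p := by
    rw [hgoal1, hstep1, hstep2]
    exact hfinal
  calc (μ {v | f (x + δ + v) ≤ y}).toReal
      ≤ (ENNReal.ofReal p).toReal := ENNReal.toReal_mono ENNReal.ofReal_ne_top hchain
    _ = p := ENNReal.toReal_ofReal hp0.le
end

section
/- Let n ≥ 1 and let X₁, …, Xₙ be independent, identically distributed real-valued random variables. Let t ∈ ℝ, set p = P(X₁ ≤ t), and let 1 ≤ q ≤ n. Then P(#{i : Xᵢ < t} ≤ q − 1) ≥ Σ_{i=0}^{q−1} C(n,i)·pⁱ·(1−p)^{n−i}. Equivalently, the q-th order statistic K_q of the sample satisfies P(K_q ≥ t) ≥ Σ_{i=0}^{q−1} C(n,i)·pⁱ·(1−p)^{n−i}, since the event {K_q ≥ t} is exactly the event that fewer than q of the samples are strictly less than t. -/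
open MeasureTheory ProbabilityTheory

open scoped Classical in
/-- For `n ≥ 1` i.i.d. real random variables `X₁, …, Xₙ`, `t ∈ ℝ`,
`p = P(X₁ ≤ t)`, and `1 ≤ q ≤ n`, we have
`P(#{i : Xᵢ < t} ≤ q − 1) ≥ Σ_{i=0}^{q−1} C(n,i)·pⁱ·(1−p)^{n−i}`
(the event `{K_q ≥ t}` for the `q`-th order statistic `K_q` is exactly the event
that fewer than `q` samples are strictly less than `t`). -/
theorem order_statistic_binomial_bound {Ω : Type*} [MeasureSpace Ω]
    [IsProbabilityMeasure (ℙ : Measure Ω)]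
    (n : ℕ) (hn : 1 ≤ n) (X : Fin n → Ω → ℝ) (hX : ∀ i, Measurable (X i))
    (hindep : iIndepFun X ℙ)
    (hident : ∀ i j, IdentDistrib (X i) (X j) ℙ ℙ)
    (t : ℝ) (q : ℕ) (hq1 : 1 ≤ q) (hqn : q ≤ n)
    (p : ℝ) (hp : p = (ℙ {ω | X ⟨0, hn⟩ ω ≤ t}).toReal) :
    ∑ i ∈ Finset.range q, (n.choose i : ℝ) * p ^ i * (1 - p) ^ (n - i) ≤
      (ℙ {ω | (Finset.univ.filter fun i => X i ω < t).card ≤ q - 1}).toReal := by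
  classical
  set i0 : Fin n := ⟨0, hn⟩ with hi0
  set B : Fin n → Set Ω := fun i => X i ⁻¹' Set.Iic t with hB
  have hBmeas : ∀ i, MeasurableSet (B i) := fun i => (hX i) measurableSet_Iic
  set p' : ENNReal := ℙ (B i0) with hp'
  have hpB : ∀ i, ℙ (B i) = p' := fun i => (hident i i0).measure_mem_eq measurableSet_Iic
  have hp'le : p' ≤ 1 := prob_le_one
  -- the atoms
  set A : Finset (Fin n) → Set Ω :=
    fun S => ⋂ i, (if i ∈ S then B i else (B i)ᶜ) with hA
  have hAmeas : ∀ S, MeasurableSet (A S) := by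
    intro S
    refine MeasurableSet.iInter fun i => ?_
    by_cases h : i ∈ S <;> simp [h, hBmeas i, (hBmeas i).compl]
  have hAmem : ∀ S ω, ω ∈ A S ↔ (Finset.univ.filter fun i => X i ω ≤ t) = S := by
    intro S ω
    simp only [hA, Set.mem_iInter, Finset.ext_iff, Finset.mem_filter, Finset.mem_univ,
      true_and]
    refine forall_congr' fun i => ?_
    by_cases h : i ∈ S <;> simp [h, hB, Set.mem_preimage, Set.mem_Iic]
  have hAmeasure : ∀ S : Finset (Fin n),
      ℙ (A S) = p' ^ S.card * (1 - p') ^ (n - S.card) := by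
    intro S
    have hm : ∀ i, MeasurableSet[(inferInstance : MeasurableSpace ℝ).comap (X i)]
        (if i ∈ S then B i else (B i)ᶜ) := by
      intro i
      by_cases h : i ∈ S
      · simp only [h, if_true]
        exact ⟨Set.Iic t, measurableSet_Iic, rfl⟩
      · simp only [h, if_false]
        exact ⟨(Set.Iic t)ᶜ, measurableSet_Iic.compl, Set.preimage_compl⟩
    have := hindep.meas_iInter hm
    rw [hA]
    simp only
    rw [this]
    have : ∀ i : Fin n, ℙ (if i ∈ S then B i else (B i)ᶜ)
        = if i ∈ S then p' else (1 - p') := by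
      intro i
      by_cases h : i ∈ S
      · simp [h, hpB i]
      · simp [h, prob_compl_eq_one_sub (hBmeas i), hpB i]
    simp_rw [this]
    rw [Finset.prod_ite, Finset.prod_const, Finset.prod_const]
    congr 1
    · congr 1
      simp [Finset.filter_mem_eq_inter]
    · congr 1
      have : Finset.univ.filter (fun i => ¬ i ∈ S) = Sᶜ := by
        ext i; simp
      rw [this, Finset.card_compl, Fintype.card_fin]
  -- disjointness
  have hdisj : Set.PairwiseDisjoint (Set.univ : Set (Finset (Fin n))) A := by
    intro S _ T _ hST
    refine Set.disjoint_left.2 fun ω hS hT => hST ?_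
    rw [hAmem] at hS hT
    rw [← hS, ← hT]
  -- the ≤ event as a union
  set E : Set Ω := {ω | (Finset.univ.filter fun i => X i ω ≤ t).card ≤ q - 1} with hE
  set 𝒮 : Finset (Finset (Fin n)) :=
    Finset.univ.filter (fun S => S.card ≤ q - 1) with h𝒮
  have hEeq : E = ⋃ S ∈ 𝒮, A S := by
    ext ω
    simp only [hE, Set.mem_setOf_eq, Set.mem_iUnion, h𝒮, Finset.mem_filter,
      Finset.mem_univ, true_and]
    constructor
    · intro h
      exact ⟨_, h, (hAmem _ ω).2 rfl⟩
    · rintro ⟨S, hS, hωS⟩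
      rw [(hAmem S ω).1 hωS]; exact hS
  have hEmeas : ℙ E = ∑ S ∈ 𝒮, ℙ (A S) := by
    rw [hEeq]
    exact measure_biUnion_finset (hdisj.subset (Set.subset_univ _)) fun S _ => hAmeas S
  -- the binomial sum in ENNReal
  have hsum : ∑ S ∈ 𝒮, ℙ (A S)
      = ∑ k ∈ Finset.range q, (n.choose k : ENNReal) * (p' ^ k * (1 - p') ^ (n - k)) := by
    have h𝒮eq : 𝒮 = (Finset.range q).biUnion
        (fun k => Finset.powersetCard k Finset.univ) := by
      ext S
      simp only [h𝒮, Finset.mem_filter, Finset.mem_univ, true_and, Finset.mem_biUnion,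
        Finset.mem_range, Finset.mem_powersetCard]
      constructor
      · intro h
        exact ⟨S.card, lt_of_le_of_lt h (Nat.sub_lt hq1 one_pos), Finset.subset_univ _, rfl⟩
      · rintro ⟨k, hk, -, rfl⟩
        omega
    rw [h𝒮eq, Finset.sum_biUnion]
    · refine Finset.sum_congr rfl fun k hk => ?_
      have : ∀ S ∈ Finset.powersetCard k (Finset.univ : Finset (Fin n)),
          ℙ (A S) = p' ^ k * (1 - p') ^ (n - k) := by
        intro S hS
        rw [Finset.mem_powersetCard] at hS
        rw [hAmeasure, hS.2]
      rw [Finset.sum_congr rfl this, Finset.sum_const, Finset.card_powersetCard,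
        Finset.card_univ, Fintype.card_fin, nsmul_eq_mul]
    · intro a ha b hb hab
      refine Finset.disjoint_left.2 fun S hSa hSb => hab ?_
      rw [Finset.mem_powersetCard] at hSa hSb
      rw [← hSa.2, ← hSb.2]
  -- inclusion into the target event
  have hsub : E ⊆ {ω | (Finset.univ.filter fun i => X i ω < t).card ≤ q - 1} := by
    intro ω hω
    refine le_trans (Finset.card_le_card ?_) hω
    intro i hi
    rw [Finset.mem_filter] at hi ⊢
    exact ⟨hi.1, le_of_lt hi.2⟩
  have hle : ℙ E ≤ ℙ {ω | (Finset.univ.filter fun i => X i ω < t).card ≤ q - 1} :=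
    measure_mono hsub
  -- convert to reals
  have hp'top : p' ≠ ⊤ := (lt_of_le_of_lt hp'le ENNReal.one_lt_top).ne
  have h1p : (1 - p').toReal = 1 - p := by
    rw [ENNReal.toReal_sub_of_le hp'le ENNReal.one_ne_top, ENNReal.toReal_one, hp]
    rfl
  have hfin : ∀ k ∈ Finset.range q,
      (n.choose k : ENNReal) * (p' ^ k * (1 - p') ^ (n - k)) ≠ ⊤ := by
    intro k _
    refine ENNReal.mul_ne_top (ENNReal.natCast_ne_top _) (ENNReal.mul_ne_top ?_ ?_)
    · exact ENNReal.pow_ne_top hp'top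
    · exact ENNReal.pow_ne_top (ENNReal.sub_ne_top ENNReal.one_ne_top)
  calc ∑ i ∈ Finset.range q, (n.choose i : ℝ) * p ^ i * (1 - p) ^ (n - i)
      = (∑ k ∈ Finset.range q,
          (n.choose k : ENNReal) * (p' ^ k * (1 - p') ^ (n - k))).toReal := by
        rw [ENNReal.toReal_sum hfin]
        refine Finset.sum_congr rfl fun k _ => ?_
        rw [ENNReal.toReal_mul, ENNReal.toReal_mul, ENNReal.toReal_pow,
          ENNReal.toReal_pow, ENNReal.toReal_natCast, h1p, hp, mul_assoc]
        rfl
    _ = (ℙ E).toReal := by rw [hEmeas, hsum]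
    _ ≤ _ := ENNReal.toReal_mono (measure_ne_top _ _) hle
end

section
/- Fix a ground-truth box B* = B(a₁,b₁,a₂,b₂) with a₁ < a₂ and b₁ < b₂. Fix x₁, y₁, y₂ ∈ ℝ with y₁ < y₂, and fix an interval [c, C] with x₁ < c ≤ C. Then the minimum over x₂ ∈ [c, C] of IoU(B(x₁,y₁,x₂,y₂), B*) is attained at an endpoint: min_{x₂ ∈ [c,C]} IoU(B(x₁,y₁,x₂,y₂), B*) = min(IoU(B(x₁,y₁,c,y₂), B*), IoU(B(x₁,y₁,C,y₂), B*)). -/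
open MeasureTheory

/-- The axis-aligned box `[x₁,x₂] × [y₁,y₂] ⊆ ℝ²`. -/
def box (x₁ y₁ x₂ y₂ : ℝ) : Set (ℝ × ℝ) := Set.Icc x₁ x₂ ×ˢ Set.Icc y₁ y₂

/-- Intersection over union of two boxes: `vol(B ∩ B′)/vol(B ∪ B′)`, where `vol` is
two-dimensional Lebesgue measure. -/
noncomputable def iou (B B' : Set (ℝ × ℝ)) : ℝ :=
  (volume (B ∩ B')).toReal / (volume (B ∪ B')).toReal

lemma vol_box (x₁ y₁ x₂ y₂ : ℝ) :
    volume (box x₁ y₁ x₂ y₂) = ENNReal.ofReal (x₂ - x₁) * ENNReal.ofReal (y₂ - y₁) := by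
  rw [box, Measure.volume_eq_prod, Measure.prod_prod, Real.volume_Icc, Real.volume_Icc]

lemma box_inter (x₁ y₁ x₂ y₂ a₁ b₁ a₂ b₂ : ℝ) :
    box x₁ y₁ x₂ y₂ ∩ box a₁ b₁ a₂ b₂ =
      box (max x₁ a₁) (max y₁ b₁) (min x₂ a₂) (min y₂ b₂) := by
  simp [box, Set.prod_inter_prod, Set.Icc_inter_Icc]

lemma vol_union_toReal (x₁ y₁ x₂ y₂ a₁ b₁ a₂ b₂ : ℝ) :
    (volume (box x₁ y₁ x₂ y₂ ∪ box a₁ b₁ a₂ b₂)).toReal =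
      (volume (box x₁ y₁ x₂ y₂)).toReal + (volume (box a₁ b₁ a₂ b₂)).toReal
        - (volume (box x₁ y₁ x₂ y₂ ∩ box a₁ b₁ a₂ b₂)).toReal := by
  have hm : MeasurableSet (box a₁ b₁ a₂ b₂) := measurableSet_Icc.prod measurableSet_Icc
  have key := measure_union_add_inter (μ := volume) (box x₁ y₁ x₂ y₂) hm
  have f1 : volume (box x₁ y₁ x₂ y₂) ≠ ⊤ := by
    rw [vol_box]; exact ENNReal.mul_ne_top ENNReal.ofReal_ne_top ENNReal.ofReal_ne_top
  have f2 : volume (box a₁ b₁ a₂ b₂) ≠ ⊤ := by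
    rw [vol_box]; exact ENNReal.mul_ne_top ENNReal.ofReal_ne_top ENNReal.ofReal_ne_top
  have f3 : volume (box x₁ y₁ x₂ y₂ ∩ box a₁ b₁ a₂ b₂) ≠ ⊤ :=
    ne_top_of_le_ne_top f1 (measure_mono Set.inter_subset_left)
  have f4 : volume (box x₁ y₁ x₂ y₂ ∪ box a₁ b₁ a₂ b₂) ≠ ⊤ := by
    refine ne_top_of_le_ne_top ?_ (measure_union_le _ _)
    exact ENNReal.add_ne_top.2 ⟨f1, f2⟩
  have := congrArg ENNReal.toReal key
  rw [ENNReal.toReal_add f4 f3, ENNReal.toReal_add f1 f2] at this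
  linarith

lemma iou_formula (a₁ b₁ a₂ b₂ x₁ y₁ x₂ y₂ : ℝ) (hx : x₁ ≤ x₂) (hy : y₁ ≤ y₂)
    (ha : a₁ ≤ a₂) (hb : b₁ ≤ b₂) :
    iou (box x₁ y₁ x₂ y₂) (box a₁ b₁ a₂ b₂) =
      (max (min x₂ a₂ - max x₁ a₁) 0 * max (min y₂ b₂ - max y₁ b₁) 0) /
        ((x₂ - x₁) * (y₂ - y₁) + (a₂ - a₁) * (b₂ - b₁)
          - max (min x₂ a₂ - max x₁ a₁) 0 * max (min y₂ b₂ - max y₁ b₁) 0) := by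
  have hI : (volume (box x₁ y₁ x₂ y₂ ∩ box a₁ b₁ a₂ b₂)).toReal =
      max (min x₂ a₂ - max x₁ a₁) 0 * max (min y₂ b₂ - max y₁ b₁) 0 := by
    rw [box_inter, vol_box, ENNReal.toReal_mul, ENNReal.toReal_ofReal', ENNReal.toReal_ofReal']
  rw [iou, hI, vol_union_toReal, hI, vol_box, vol_box, ENNReal.toReal_mul,
    ENNReal.toReal_mul, ENNReal.toReal_ofReal', ENNReal.toReal_ofReal',
    ENNReal.toReal_ofReal', ENNReal.toReal_ofReal',
    max_eq_left (by linarith : (0:ℝ) ≤ x₂ - x₁), max_eq_left (by linarith : (0:ℝ) ≤ y₂ - y₁),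
    max_eq_left (by linarith : (0:ℝ) ≤ a₂ - a₁), max_eq_left (by linarith : (0:ℝ) ≤ b₂ - b₁)]

lemma key_mono_up (x₁ m u v h hIv A : ℝ) (hm : x₁ ≤ m) (h0 : 0 ≤ hIv) (hh : hIv ≤ h)
    (hu : x₁ < u) (huv : u ≤ v) (hA : 0 < A) :
    max (u - m) 0 * hIv / ((u - x₁) * h + A - max (u - m) 0 * hIv) ≤
      max (v - m) 0 * hIv / ((v - x₁) * h + A - max (v - m) 0 * hIv) := by
  have hh0 : 0 ≤ h := le_trans h0 hh
  have hWu : max (u - m) 0 ≤ u - x₁ := by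
    rcases max_cases (u - m) 0 with ⟨e, _⟩ | ⟨e, _⟩ <;> rw [e] <;> linarith
  have hWv : max (v - m) 0 ≤ v - x₁ := by
    rcases max_cases (v - m) 0 with ⟨e, _⟩ | ⟨e, _⟩ <;> rw [e] <;> linarith
  have hWu0 : 0 ≤ max (u - m) 0 := le_max_right _ _
  have hWv0 : 0 ≤ max (v - m) 0 := le_max_right _ _
  have hDu : 0 < (u - x₁) * h + A - max (u - m) 0 * hIv := by
    have : max (u - m) 0 * hIv ≤ (u - x₁) * h := mul_le_mul hWu hh h0 (by linarith)
    linarith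
  have hDv : 0 < (v - x₁) * h + A - max (v - m) 0 * hIv := by
    have : max (v - m) 0 * hIv ≤ (v - x₁) * h := mul_le_mul hWv hh h0 (by linarith)
    linarith
  rw [div_le_div_iff₀ hDu hDv]
  have key : max (u - m) 0 * ((v - x₁) * h + A) ≤ max (v - m) 0 * ((u - x₁) * h + A) := by
    rcases max_cases (u - m) 0 with ⟨e, he⟩ | ⟨e, he⟩
    · rw [e]
      have ev : max (v - m) 0 = v - m := max_eq_left (by linarith)
      rw [ev]
      nlinarith [mul_nonneg (sub_nonneg.2 huv) (sub_nonneg.2 hm)]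
    · rw [e]
      have h1 : 0 ≤ (u - x₁) * h + A := by nlinarith
      nlinarith [mul_nonneg hWv0 h1]
  nlinarith [mul_le_mul_of_nonneg_left key h0]

lemma key_mono_down (x₁ u v h N A : ℝ) (hN : 0 ≤ N) (hNle : N ≤ (u - x₁) * h)
    (huv : u ≤ v) (hh : 0 ≤ h) (hA : 0 < A) :
    N / ((v - x₁) * h + A - N) ≤ N / ((u - x₁) * h + A - N) := by
  have hDu : 0 < (u - x₁) * h + A - N := by linarith
  have hDv : 0 < (v - x₁) * h + A - N := by nlinarith
  rw [div_le_div_iff₀ hDv hDu]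
  nlinarith [mul_nonneg hN (mul_nonneg (sub_nonneg.2 huv) hh)]


/-- Fixing a nondegenerate ground-truth box `B* = B(a₁,b₁,a₂,b₂)`,
coordinates `x₁`, `y₁ < y₂`, and an interval `[c, C]` with `x₁ < c ≤ C`, the minimum
over `x₂ ∈ [c, C]` of `IoU(B(x₁,y₁,x₂,y₂), B*)` is attained at an endpoint:
it equals `min(IoU(B(x₁,y₁,c,y₂), B*), IoU(B(x₁,y₁,C,y₂), B*))`. -/
theorem iou_min_at_endpoint (a₁ b₁ a₂ b₂ : ℝ) (ha : a₁ < a₂) (hb : b₁ < b₂)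
    (x₁ y₁ y₂ c C : ℝ) (hy : y₁ < y₂) (hc : x₁ < c) (hcC : c ≤ C) :
    sInf ((fun x₂ => iou (box x₁ y₁ x₂ y₂) (box a₁ b₁ a₂ b₂)) '' Set.Icc c C) =
      min (iou (box x₁ y₁ c y₂) (box a₁ b₁ a₂ b₂))
        (iou (box x₁ y₁ C y₂) (box a₁ b₁ a₂ b₂)) := by
  set f : ℝ → ℝ := fun x₂ => iou (box x₁ y₁ x₂ y₂) (box a₁ b₁ a₂ b₂) with hf
  have hIvh : max (min y₂ b₂ - max y₁ b₁) 0 ≤ y₂ - y₁ := by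
    rcases max_cases (min y₂ b₂ - max y₁ b₁) 0 with ⟨e, _⟩ | ⟨e, _⟩ <;> rw [e]
    · have := min_le_left y₂ b₂; have := le_max_left y₁ b₁; linarith
    · linarith
  have hIv0 : 0 ≤ max (min y₂ b₂ - max y₁ b₁) 0 := le_max_right _ _
  have hA : 0 < (a₂ - a₁) * (b₂ - b₁) := by nlinarith
  -- the key pointwise lower bound
  have claim : ∀ x ∈ Set.Icc c C, min (f c) (f C) ≤ f x := by
    rintro x ⟨hcx, hxC⟩
    rcases le_total x a₂ with hxa | hax
    · refine le_trans (min_le_left _ _) ?_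
      rw [hf]
      simp only
      rw [iou_formula _ _ _ _ _ _ _ _ (by linarith) hy.le ha.le hb.le,
        iou_formula _ _ _ _ _ _ _ _ (by linarith) hy.le ha.le hb.le,
        min_eq_left (by linarith : c ≤ a₂), min_eq_left hxa]
      exact key_mono_up x₁ (max x₁ a₁) c x (y₂ - y₁) _ _ (le_max_left _ _) hIv0 hIvh hc hcx hA
    · refine le_trans (min_le_right _ _) ?_
      rw [hf]
      simp only
      rw [iou_formula _ _ _ _ _ _ _ _ (by linarith) hy.le ha.le hb.le,
        iou_formula _ _ _ _ _ _ _ _ (by linarith) hy.le ha.le hb.le,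
        min_eq_right (by linarith : a₂ ≤ C), min_eq_right hax]
      refine key_mono_down x₁ x C (y₂ - y₁) _ _ (mul_nonneg (le_max_right _ _) hIv0) ?_ hxC (by linarith) hA
      have h1 : max (a₂ - max x₁ a₁) 0 ≤ x - x₁ := by
        rcases max_cases (a₂ - max x₁ a₁) 0 with ⟨e, _⟩ | ⟨e, _⟩ <;> rw [e]
        · have := le_max_left x₁ a₁; linarith
        · linarith
      exact mul_le_mul h1 hIvh hIv0 (by linarith)
  have hmemc : f c ∈ f '' Set.Icc c C := ⟨c, ⟨le_refl c, hcC⟩, rfl⟩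
  have hmemC : f C ∈ f '' Set.Icc c C := ⟨C, ⟨hcC, le_refl C⟩, rfl⟩
  have hbdd : BddBelow (f '' Set.Icc c C) := by
    refine ⟨min (f c) (f C), ?_⟩
    rintro y ⟨x, hx, rfl⟩
    exact claim x hx
  refine le_antisymm (le_min (csInf_le hbdd hmemc) (csInf_le hbdd hmemC)) ?_
  refine le_csInf ⟨f c, hmemc⟩ ?_
  rintro y ⟨x, hx, rfl⟩
  exact claim x hx
end
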